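/- arXiv:0801.4556 — 6 statements merged into one kernel-verified Lean document; each statement's English description precedes it below -/
import Mathlib

section
/- (Orbit lemma) Let (Π, g) be an n-dimensional Boolean system and let S be the multiset of states in a periodic orbit of g. Let k ∈ [n] be such that the bias Λ of the regulatory function g_k satisfies |Λ − 1/2| ≥ ε, where 0 < ε < 1/2, and let I be the set of input variables of g_k. Then for any 0 < τ < 1/2, either ζ*_I(S) ≥ τ/2^{|I|} or ζ*_{{k}}(S) ≥ (1−τ)ε − τ/2. -/
open Finset

/-- `φ` depends on input variable `i`. -/
def BoolFunDependsOn {n : ℕ} (φ : (Fin n → Bool) → Bool) (i : Fin n) : Prop :=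
  ∃ s r : Fin n → Bool, (∀ j, j ≠ i → s j = r j) ∧ φ s ≠ φ r



lemma indep_step {n : ℕ} (φ : (Fin n → Bool) → Bool) (I : Finset (Fin n))
    (h : ∀ i, i ∉ I → ∀ x y : Fin n → Bool, (∀ j, j ≠ i → x j = y j) → φ x = φ y)
    (J : Finset (Fin n)) :
    ∀ x y : Fin n → Bool, (∀ i ∈ I, x i = y i) →
      (∀ i, x i ≠ y i → i ∈ J) → φ x = φ y := by
  induction J using Finset.induction_on with
  | empty =>
    intro x y _ hJ
    have hxy : x = y := funext fun i => by
      by_contra hc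
      exact absurd (hJ i hc) (Finset.notMem_empty i)
    rw [hxy]
  | @insert a J ha ih =>
    intro x y hIxy hJ
    set x' := Function.update x a (y a) with hx'
    have h1 : φ x = φ x' := by
      by_cases haI : a ∈ I
      · have : x' = x := by
          rw [hx', ← hIxy a haI, Function.update_eq_self]
        rw [this]
      · exact h a haI x x' (fun j hj => (Function.update_of_ne hj _ _).symm)
    have h2 : ∀ i ∈ I, x' i = y i := by
      intro i hi
      by_cases hia : i = a
      · subst hia; simp [hx']
      · rw [hx', Function.update_of_ne hia]; exact hIxy i hi
    have h3 : ∀ i, x' i ≠ y i → i ∈ J := by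
      intro i hne
      have hia : i ≠ a := by
        intro h'; subst h'; simp [hx'] at hne
      rw [hx', Function.update_of_ne hia] at hne
      rcases Finset.mem_insert.mp (hJ i hne) with h' | h'
      · exact absurd h' hia
      · exact h'
    exact h1.trans (ih x' y h2 h3)

lemma agreeOn_eq {n : ℕ} (φ : (Fin n → Bool) → Bool) (I : Finset (Fin n))
    (hI : ∀ i, (∃ s r : Fin n → Bool, (∀ j, j ≠ i → s j = r j) ∧ φ s ≠ φ r) ↔ i ∈ I) :
    ∀ x y, (∀ i ∈ I, x i = y i) → φ x = φ y := by
  have h : ∀ i, i ∉ I → ∀ x y : Fin n → Bool, (∀ j, j ≠ i → x j = y j) → φ x = φ y := by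
    intro i hi x y hxy
    by_contra hne
    exact hi ((hI i).mp ⟨x, y, hxy, hne⟩)
  intro x y hxy
  exact indep_step φ I h Finset.univ x y hxy (fun i _ => Finset.mem_univ i)

lemma card_pattern {n : ℕ} (I : Finset (Fin n)) (σ : Fin n → Bool) :
    (univ.filter fun x : Fin n → Bool => ∀ i ∈ I, x i = σ i).card = 2 ^ (n - I.card) := by
  have he : (univ.filter fun x : Fin n → Bool => ∀ i ∈ I, x i = σ i)
      = Fintype.piFinset (fun i => if i ∈ I then {σ i} else (Finset.univ : Finset Bool)) := by
    ext x
    simp only [mem_filter, mem_univ, true_and, Fintype.mem_piFinset]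
    constructor
    · intro hx i
      by_cases hi : i ∈ I <;> simp [hi, hx]
    · intro hx i hi
      have := hx i
      simpa [hi] using this
  rw [he, Fintype.card_piFinset]
  have hc : ∀ i : Fin n, (if i ∈ I then ({σ i} : Finset Bool) else univ).card
      = if i ∈ I then 1 else 2 := by
    intro i; by_cases hi : i ∈ I <;> simp [hi]
  rw [Finset.prod_congr rfl (fun i _ => hc i), Finset.prod_ite, Finset.prod_const,
    Finset.prod_const, one_pow, one_mul]
  congr 1
  have : (univ.filter fun i : Fin n => ¬ i ∈ I) = Iᶜ := by ext i; simp
  rw [this, Finset.card_compl, Fintype.card_fin]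

lemma card_R {n : ℕ} (I : Finset (Fin n)) :
    (univ.filter fun σ : Fin n → Bool => ∀ i, i ∉ I → σ i = false).card = 2 ^ I.card := by
  have he : (univ.filter fun σ : Fin n → Bool => ∀ i, i ∉ I → σ i = false)
      = Fintype.piFinset (fun i => if i ∈ I then (Finset.univ : Finset Bool) else {false}) := by
    ext x
    simp only [mem_filter, mem_univ, true_and, Fintype.mem_piFinset]
    constructor
    · intro hx i
      by_cases hi : i ∈ I <;> simp [hi, hx i]
    · intro hx i hi
      have := hx i
      simpa [hi] using this
  rw [he, Fintype.card_piFinset]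
  have hc : ∀ i : Fin n, (if i ∈ I then (univ : Finset Bool) else {false}).card
      = if i ∈ I then 2 else 1 := by
    intro i; by_cases hi : i ∈ I <;> simp [hi]
  rw [Finset.prod_congr rfl (fun i _ => hc i), Finset.prod_ite, Finset.prod_const,
    Finset.prod_const, one_pow, mul_one]
  congr 1
  have : (univ.filter fun i : Fin n => i ∈ I) = I := by ext i; simp
  rw [this]

noncomputable def proj {n : ℕ} (I : Finset (Fin n)) : (Fin n → Bool) → (Fin n → Bool) :=
  fun x i => if i ∈ I then x i else false

lemma proj_key {n : ℕ} (I : Finset (Fin n)) (σ : Fin n → Bool)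
    (hσ : ∀ i, i ∉ I → σ i = false) (x : Fin n → Bool) :
    proj I x = σ ↔ ∀ i ∈ I, x i = σ i := by
  constructor
  · intro h i hi
    rw [← h]; exact (if_pos hi).symm
  · intro h; funext i
    by_cases hi : i ∈ I
    · simpa [proj, hi] using h i hi
    · simp [proj, hi, hσ i hi]

lemma shift_count {n L : ℕ} (s : ℕ → Fin n → Bool) (hper : ∀ t, s (t + L) = s t)
    (p : (Fin n → Bool) → Prop) [DecidablePred p] :
    ((range L).filter fun t => p (s (t + 1))).card
      = ((range L).filter fun t => p (s t)).card := by
  classical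
  have h1 : ∀ (f : ℕ → ℕ), (∑ t ∈ range L, f (t + 1)) + f 0 = (∑ t ∈ range L, f t) + f L := by
    intro f
    rw [← Finset.sum_range_succ', Finset.sum_range_succ]
  rw [Finset.card_filter, Finset.card_filter]
  have hL0 : s L = s 0 := by simpa using hper 0
  have := h1 (fun t => if p (s t) then 1 else 0)
  simp only [hL0] at this
  omega

lemma orbit_count {n L : ℕ} (g : (Fin n → Bool) → (Fin n → Bool)) (s : ℕ → Fin n → Bool)
    (hstep : ∀ t, g (s t) = s (t + 1)) (hper : ∀ t, s (t + L) = s t)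
    (k : Fin n) (I : Finset (Fin n))
    (hind : ∀ x y, (∀ i ∈ I, x i = y i) → g x k = g y k) (b : Bool) :
    ((range L).filter fun t => s t k = b).card
      = ∑ σ ∈ (univ.filter fun σ : Fin n → Bool =>
          (∀ i, i ∉ I → σ i = false) ∧ g σ k = b),
          ((range L).filter fun t => ∀ i ∈ I, s t i = σ i).card := by
  classical
  rw [← shift_count s hper (fun x => x k = b)]
  have hpred : ((range L).filter fun t => s (t + 1) k = b)
      = (range L).filter fun t => g (s t) k = b := by
    apply Finset.filter_congr
    intro t _
    rw [hstep t]
  rw [hpred]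
  have hmem : ∀ t ∈ ((range L).filter fun t => g (s t) k = b), proj I (s t) ∈
      (univ.filter fun σ : Fin n → Bool => (∀ i, i ∉ I → σ i = false) ∧ g σ k = b) := by
    intro t ht
    simp only [mem_filter, mem_univ, true_and] at ht ⊢
    refine ⟨fun i hi => if_neg hi, ?_⟩
    rw [hind (proj I (s t)) (s t) (fun i hi => if_pos hi)]
    exact ht.2
  rw [Finset.card_eq_sum_card_fiberwise hmem]
  refine Finset.sum_congr rfl (fun σ hσ => ?_)
  simp only [mem_filter, mem_univ, true_and] at hσ
  rw [Finset.filter_filter]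
  congr 1
  ext t
  simp only [mem_filter, mem_range]
  rw [proj_key I σ hσ.1]
  constructor
  · exact fun h => ⟨h.1, h.2.2⟩
  · intro h
    refine ⟨h.1, ?_, h.2⟩
    rw [hind (s t) σ h.2]
    exact hσ.2

lemma cube_count {n : ℕ} (φ : (Fin n → Bool) → Bool) (I : Finset (Fin n)) (hind : ∀ x y, (∀ i ∈ I, x i = y i) → φ x = φ y) (b : Bool) :
    (univ.filter fun x => φ x = b).card
      = (univ.filter fun σ : Fin n → Bool =>
          (∀ i, i ∉ I → σ i = false) ∧ φ σ = b).card * 2 ^ (n - I.card) := by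
  have hmem : ∀ x ∈ (univ.filter fun x => φ x = b), proj I x ∈
      (univ.filter fun σ : Fin n → Bool => (∀ i, i ∉ I → σ i = false) ∧ φ σ = b) := by
    intro x hx
    simp only [mem_filter, mem_univ, true_and] at hx ⊢
    refine ⟨fun i hi => if_neg hi, ?_⟩
    rw [hind (proj I x) x (fun i hi => if_pos hi)]; exact hx
  rw [Finset.card_eq_sum_card_fiberwise hmem]
  rw [Finset.sum_congr rfl (fun σ hσ => ?_), Finset.sum_const, smul_eq_mul]
  simp only [mem_filter, mem_univ, true_and] at hσ
  have : ((univ.filter fun x => φ x = b).filter fun x => proj I x = σ)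
      = univ.filter fun x => ∀ i ∈ I, x i = σ i := by
    rw [Finset.filter_filter]
    ext x
    simp only [mem_filter, mem_univ, true_and]
    rw [proj_key I σ hσ.1 x]
    constructor
    · exact fun h => h.2
    · intro h
      refine ⟨?_, h⟩
      rw [hind x σ h]; exact hσ.2
  rw [this, card_pattern]


set_option maxHeartbeats 1000000 in
/-- Orbit lemma: along a periodic orbit, if the regulatory function `g_k` has bias bounded
away from `1/2` by `ε`, then either some pattern `σ` on the input set `I` of `g_k` has
frequency deficiency `ζ*_I ≥ τ/2^|I|`, or `ζ*_{k} ≥ (1-τ)ε - τ/2`. -/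
theorem stmt7 {n : ℕ} (g : (Fin n → Bool) → (Fin n → Bool))
    (L : ℕ) (hL : 0 < L) (s : ℕ → Fin n → Bool)
    (hstep : ∀ t, g (s t) = s (t + 1))
    (hper : ∀ t, s (t + L) = s t)
    (hdistinct : Set.InjOn s (Finset.range L))
    (k : Fin n) (I : Finset (Fin n))
    (hI : ∀ i, BoolFunDependsOn (fun x => g x k) i ↔ i ∈ I)
    (ε : ℝ) (hε0 : 0 < ε) (hε1 : ε < 1 / 2)
    (hbias : |((univ.filter fun x : Fin n → Bool => g x k = true).card : ℝ) / 2 ^ n - 1 / 2| ≥ ε)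
    (τ : ℝ) (hτ0 : 0 < τ) (hτ1 : τ < 1 / 2) :
    (∃ σ : Fin n → Bool,
        1 / 2 ^ I.card - (((range L).filter fun t => ∀ i ∈ I, s t i = σ i).card : ℝ) / L
          ≥ τ / 2 ^ I.card) ∨
    (∃ b : Bool,
        1 / 2 - (((range L).filter fun t => s t k = b).card : ℝ) / L
          ≥ (1 - τ) * ε - τ / 2) := by
  classical
  by_cases h1 : (∃ σ : Fin n → Bool,
      1 / 2 ^ I.card - (((range L).filter fun t => ∀ i ∈ I, s t i = σ i).card : ℝ) / L
        ≥ τ / 2 ^ I.card)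
  · exact Or.inl h1
  right
  push_neg at h1
  have hmn : I.card ≤ n := by
    simpa using Finset.card_le_univ I
  have hind : ∀ x y, (∀ i ∈ I, x i = y i) → g x k = g y k :=
    agreeOn_eq (fun x => g x k) I (fun i => hI i)
  have hLpos : (0:ℝ) < L := by exact_mod_cast hL
  have hP : (0:ℝ) < 2 ^ I.card := by positivity
  -- per-pattern lower bound
  have hcnt : ∀ σ : Fin n → Bool,
      (1 - τ) / 2 ^ I.card * L
        ≤ (((range L).filter fun t => ∀ i ∈ I, s t i = σ i).card : ℝ) := by
    intro σ
    have h := h1 σ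
    have h2 : (1 - τ) / 2 ^ I.card
        < (((range L).filter fun t => ∀ i ∈ I, s t i = σ i).card : ℝ) / L := by
      have e : (1 - τ) / (2:ℝ) ^ I.card = 1 / 2 ^ I.card - τ / 2 ^ I.card := by ring
      rw [e]; linarith
    rw [lt_div_iff₀ hLpos] at h2
    linarith
  -- sum lower bound for each b
  have hsum : ∀ b : Bool,
      ((univ.filter fun σ : Fin n → Bool =>
          (∀ i, i ∉ I → σ i = false) ∧ g σ k = b).card : ℝ) * ((1 - τ) / 2 ^ I.card * L)
        ≤ (((range L).filter fun t => s t k = b).card : ℝ) := by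
    intro b
    rw [orbit_count g s hstep hper k I hind b]
    push_cast
    have e : ((univ.filter fun σ : Fin n → Bool =>
          (∀ i, i ∉ I → σ i = false) ∧ g σ k = b).card : ℝ) * ((1 - τ) / 2 ^ I.card * L)
        = ∑ σ ∈ (univ.filter fun σ : Fin n → Bool =>
          (∀ i, i ∉ I → σ i = false) ∧ g σ k = b), ((1 - τ) / 2 ^ I.card * L) := by
      rw [Finset.sum_const, nsmul_eq_mul]
    rw [e]
    exact Finset.sum_le_sum (fun σ _ => hcnt σ)
  -- cube side
  have hcube := cube_count (fun x => g x k) I hind true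
  have hTT : (univ.filter fun σ : Fin n → Bool =>
        (∀ i, i ∉ I → σ i = false) ∧ g σ k = true).card
      + (univ.filter fun σ : Fin n → Bool =>
        (∀ i, i ∉ I → σ i = false) ∧ g σ k = false).card = 2 ^ I.card := by
    rw [← card_R I]
    have e1 : (univ.filter fun σ : Fin n → Bool =>
        (∀ i, i ∉ I → σ i = false) ∧ g σ k = true)
        = (univ.filter fun σ : Fin n → Bool => ∀ i, i ∉ I → σ i = false).filter
          (fun σ => g σ k = true) := by
      rw [Finset.filter_filter]
    have e2 : (univ.filter fun σ : Fin n → Bool =>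
        (∀ i, i ∉ I → σ i = false) ∧ g σ k = false)
        = (univ.filter fun σ : Fin n → Bool => ∀ i, i ∉ I → σ i = false).filter
          (fun σ => ¬ (g σ k = true)) := by
      rw [Finset.filter_filter]
      apply Finset.filter_congr
      intro σ _
      simp [Bool.not_eq_true]
    rw [e1, e2]
    exact Finset.card_filter_add_card_filter_not _
  -- bias as pattern fraction
  have hΛ : ((univ.filter fun x : Fin n → Bool => g x k = true).card : ℝ) / 2 ^ n
      = ((univ.filter fun σ : Fin n → Bool =>
          (∀ i, i ∉ I → σ i = false) ∧ g σ k = true).card : ℝ) / 2 ^ I.card := by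
    rw [hcube]
    push_cast
    have h2n : (2:ℝ) ^ n = 2 ^ I.card * 2 ^ (n - I.card) := by
      rw [← pow_add, Nat.add_sub_cancel' hmn]
    rw [h2n]
    have hQ : (0:ℝ) < 2 ^ (n - I.card) := by positivity
    field_simp
  -- orbit counts sum to L
  have hNsum : (((range L).filter fun t => s t k = true).card : ℝ)
      + (((range L).filter fun t => s t k = false).card : ℝ) = L := by
    have e2 : ((range L).filter fun t => s t k = false)
        = (range L).filter (fun t => ¬ (s t k = true)) := by
      apply Finset.filter_congr
      intro t _
      simp [Bool.not_eq_true]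
    have hn := Finset.card_filter_add_card_filter_not
      (s := range L) (p := fun t => s t k = true)
    rw [Finset.card_range] at hn
    rw [e2]
    exact_mod_cast hn
  have hτ' : (0:ℝ) ≤ (1 - τ) / 2 ^ I.card * L := by
    have : (0:ℝ) ≤ 1 - τ := by linarith
    positivity
  rcases le_abs.mp hbias with hca | hca
  · -- Λ ≥ 1/2 + ε ; take b = false
    rw [hΛ] at hca
    have hq : (1/2 + ε) * 2 ^ I.card
        ≤ ((univ.filter fun σ : Fin n → Bool =>
            (∀ i, i ∉ I → σ i = false) ∧ g σ k = true).card : ℝ) := by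
      have h' : (ε + 1/2) * 2 ^ I.card
          ≤ ((univ.filter fun σ : Fin n → Bool =>
            (∀ i, i ∉ I → σ i = false) ∧ g σ k = true).card : ℝ) := by
        rw [← le_div_iff₀ hP]; linarith
      linarith
    have hNt : (1/2 + ε) * (1 - τ) * L
        ≤ (((range L).filter fun t => s t k = true).card : ℝ) := by
      refine le_trans ?_ (hsum true)
      rw [show ((univ.filter fun σ : Fin n → Bool =>
            (∀ i, i ∉ I → σ i = false) ∧ g σ k = true).card : ℝ) * ((1 - τ) / 2 ^ I.card * L)
          = ((univ.filter fun σ : Fin n → Bool =>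
            (∀ i, i ∉ I → σ i = false) ∧ g σ k = true).card : ℝ) * ((1 - τ) / 2 ^ I.card * L) from rfl]
      calc (1/2 + ε) * (1 - τ) * L
          = ((1/2 + ε) * 2 ^ I.card) * ((1 - τ) / 2 ^ I.card * L) := by
            field_simp
        _ ≤ _ := by
            exact mul_le_mul_of_nonneg_right hq hτ'
    refine ⟨false, ?_⟩
    have hdiv : (((range L).filter fun t => s t k = false).card : ℝ) / L
        ≤ 1 - (1/2 + ε) * (1 - τ) := by
      rw [div_le_iff₀ hLpos]; nlinarith [hNsum, hNt]
    rw [ge_iff_le]; linarith [hdiv]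
  · -- Λ ≤ 1/2 - ε ; take b = true
    rw [hΛ] at hca
    have hq : (1/2 + ε) * 2 ^ I.card
        ≤ ((univ.filter fun σ : Fin n → Bool =>
            (∀ i, i ∉ I → σ i = false) ∧ g σ k = false).card : ℝ) := by
      have hqt : ((univ.filter fun σ : Fin n → Bool =>
            (∀ i, i ∉ I → σ i = false) ∧ g σ k = true).card : ℝ)
          ≤ (1/2 - ε) * 2 ^ I.card := by
        have h' : ((univ.filter fun σ : Fin n → Bool =>
            (∀ i, i ∉ I → σ i = false) ∧ g σ k = true).card : ℝ) / 2 ^ I.card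
            ≤ 1/2 - ε := by linarith
        rw [div_le_iff₀ hP] at h'
        linarith
      have := hTT
      have hcast : ((univ.filter fun σ : Fin n → Bool =>
            (∀ i, i ∉ I → σ i = false) ∧ g σ k = true).card : ℝ)
          + ((univ.filter fun σ : Fin n → Bool =>
            (∀ i, i ∉ I → σ i = false) ∧ g σ k = false).card : ℝ) = 2 ^ I.card := by
        exact_mod_cast hTT
      linarith
    have hNf : (1/2 + ε) * (1 - τ) * L
        ≤ (((range L).filter fun t => s t k = false).card : ℝ) := by
      refine le_trans ?_ (hsum false)
      calc (1/2 + ε) * (1 - τ) * L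
          = ((1/2 + ε) * 2 ^ I.card) * ((1 - τ) / 2 ^ I.card * L) := by
            field_simp
        _ ≤ _ := mul_le_mul_of_nonneg_right hq hτ'
    refine ⟨true, ?_⟩
    have hdiv : (((range L).filter fun t => s t k = true).card : ℝ) / L
        ≤ 1 - (1/2 + ε) * (1 - τ) := by
      rw [div_le_iff₀ hLpos]; nlinarith [hNsum, hNf]
    rw [ge_iff_le]; linarith [hdiv]
end

section
/- Let (Π, g) be a Boolean system and suppose the multiset S of states in a periodic orbit satisfies ζ*_I(S) < τ/2^{|I|} for the input set I of regulatory function g_k, where g_k has bias Λ ≥ 1/2 + ε and 0 < τ < 1/2. Then the fraction ζ_k(S) of states in the orbit with k-th coordinate equal to 1 satisfies ζ_k(S) > 1/2 + (1−τ)ε − τ/2. -/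
open Finset

def Patterns {n : ℕ} (I : Finset (Fin n)) : Finset (Fin n → Bool) :=
  univ.filter fun σ => ∀ i, i ∉ I → σ i = false

def restr {n : ℕ} (I : Finset (Fin n)) (x : Fin n → Bool) : Fin n → Bool :=
  fun i => if i ∈ I then x i else false

lemma restr_mem {n : ℕ} (I : Finset (Fin n)) (x : Fin n → Bool) : restr I x ∈ Patterns I := by
  simp only [Patterns, mem_filter, mem_univ, true_and, restr]
  intro i hi; simp [hi]

lemma restr_eq_iff {n : ℕ} {I : Finset (Fin n)} {x σ : Fin n → Bool} (hσ : σ ∈ Patterns I) :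
    restr I x = σ ↔ ∀ i ∈ I, x i = σ i := by
  simp only [Patterns, mem_filter, mem_univ, true_and] at hσ
  constructor
  · intro h i hi
    rw [← h]; simp [restr, hi]
  · intro h
    funext i
    by_cases hi : i ∈ I
    · simp [restr, hi, h i hi]
    · simp [restr, hi, hσ i hi]

lemma agree_on_inputs {n : ℕ} (φ : (Fin n → Bool) → Bool) (I : Finset (Fin n))
    (hI : ∀ i, BoolFunDependsOn φ i ↔ i ∈ I) (x y : Fin n → Bool)
    (hxy : ∀ i ∈ I, x i = y i) : φ x = φ y := by
  have key : ∀ J : Finset (Fin n), φ (fun j => if j ∈ J then x j else y j) = φ y := by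
    intro J
    induction J using Finset.induction_on with
    | empty => simp
    | @insert a J ha ih =>
      by_cases haI : a ∈ I
      · have hfun : (fun j => if j ∈ insert a J then x j else y j)
            = fun j => if j ∈ J then x j else y j := by
          funext j
          by_cases hj : j = a
          · subst hj
            simp [ha, hxy j haI]
          · simp [Finset.mem_insert, hj]
        rw [hfun, ih]
      · have hnd : ¬ BoolFunDependsOn φ a := fun h => haI ((hI a).mp h)
        have heq : φ (fun j => if j ∈ insert a J then x j else y j)
            = φ (fun j => if j ∈ J then x j else y j) := by
          by_contra hne
          exact hnd ⟨_, _, fun j hj => by simp [Finset.mem_insert, hj], hne⟩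
        rw [heq, ih]
  have := key univ
  simpa using this

lemma card_patterns {n : ℕ} (I : Finset (Fin n)) : (Patterns I).card = 2 ^ I.card := by
  rw [← Finset.card_powerset]
  apply Finset.card_bij (fun σ _ => I.filter (fun i => σ i = true))
  · intro σ hσ
    simp only [Finset.mem_powerset]
    exact Finset.filter_subset _ _
  · intro σ₁ h1 σ₂ h2 heq
    simp only [Patterns, mem_filter, mem_univ, true_and] at h1 h2
    funext i
    by_cases hi : i ∈ I
    · have : (i ∈ I.filter (fun i => σ₁ i = true)) ↔ (i ∈ I.filter (fun i => σ₂ i = true)) := by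
        rw [heq]
      simp only [mem_filter, hi, true_and] at this
      cases hb1 : σ₁ i <;> cases hb2 : σ₂ i <;> simp_all
    · rw [h1 i hi, h2 i hi]
  · intro J hJ
    simp only [Finset.mem_powerset] at hJ
    refine ⟨fun i => decide (i ∈ J), ?_, ?_⟩
    · simp only [Patterns, mem_filter, mem_univ, true_and]
      intro i hi
      simp only [decide_eq_false_iff_not]
      exact fun h => hi (hJ h)
    · ext i
      simp only [mem_filter, decide_eq_true_eq]
      exact ⟨fun h => h.2, fun h => ⟨hJ h, h⟩⟩

lemma fib_card {n : ℕ} (I : Finset (Fin n)) {σ σ' : Fin n → Bool}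
    (hσ : σ ∈ Patterns I) (hσ' : σ' ∈ Patterns I) :
    (univ.filter fun x => restr I x = σ).card = (univ.filter fun x => restr I x = σ').card := by
  apply Finset.card_bij' (fun x _ => fun i => if i ∈ I then σ' i else x i)
      (fun y _ => fun i => if i ∈ I then σ i else y i)
  · intro x hx
    simp only [mem_filter, mem_univ, true_and] at hx ⊢
    rw [restr_eq_iff hσ']
    intro i hi; simp [hi]
  · intro y hy
    simp only [mem_filter, mem_univ, true_and] at hy ⊢
    rw [restr_eq_iff hσ]
    intro i hi; simp [hi]
  · intro x hx
    simp only [mem_filter, mem_univ, true_and] at hx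
    rw [restr_eq_iff hσ] at hx
    funext i
    by_cases hi : i ∈ I
    · simp only [hi, if_pos]
      exact (hx i hi).symm
    · simp [hi]
  · intro y hy
    simp only [mem_filter, mem_univ, true_and] at hy
    rw [restr_eq_iff hσ'] at hy
    funext i
    by_cases hi : i ∈ I
    · simp only [hi, if_pos]
      exact (hy i hi).symm
    · simp [hi]

lemma s_mod {α : Type*} {L : ℕ} (hL : 0 < L) (s : ℕ → α)
    (hper : ∀ t, s (t + L) = s t) : ∀ a, s a = s (a % L) := by
  intro a
  induction a using Nat.strong_induction_on with
  | _ a ih =>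
    rcases lt_or_ge a L with h | h
    · rw [Nat.mod_eq_of_lt h]
    · have h1 : a - L + L = a := Nat.sub_add_cancel h
      have h2 : s a = s (a - L) := by rw [← hper (a - L), h1]
      rw [h2, ih (a - L) (by omega), Nat.mod_eq_sub_mod h]

lemma orbit_shift {α : Type*} {L : ℕ} (hL : 0 < L) (s : ℕ → α)
    (hper : ∀ t, s (t + L) = s t) (p : α → Prop) [DecidablePred p] :
    ((range L).filter fun t => p (s (t + 1))).card
      = ((range L).filter fun t => p (s t)).card := by
  have hmod := s_mod hL s hper
  apply Finset.card_bij' (fun t _ => (t + 1) % L) (fun t _ => (t + (L - 1)) % L)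
  · intro t ht
    simp only [mem_filter, mem_range] at ht ⊢
    refine ⟨Nat.mod_lt _ hL, ?_⟩
    rw [← hmod]
    exact ht.2
  · intro t ht
    simp only [mem_filter, mem_range] at ht ⊢
    refine ⟨Nat.mod_lt _ hL, ?_⟩
    have key : (t + (L - 1)) % L + 1 ≡ t [MOD L] := by
      calc (t + (L - 1)) % L + 1 ≡ t + (L - 1) + 1 [MOD L] :=
            Nat.ModEq.add_right 1 (Nat.mod_modEq _ _)
        _ = t + L := by omega
        _ ≡ t [MOD L] := by simp [Nat.ModEq, Nat.add_mod_right]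
    have : s ((t + (L - 1)) % L + 1) = s t := by
      rw [hmod ((t + (L - 1)) % L + 1), key, Nat.mod_eq_of_lt ht.1]
    rw [this]
    exact ht.2
  · intro t ht
    simp only [mem_filter, mem_range] at ht
    have : ((t + 1) % L + (L - 1)) % L = t % L := by
      calc ((t + 1) % L + (L - 1)) % L = (t + 1 + (L - 1)) % L := Nat.mod_add_mod _ _ _
        _ = (t + L) % L := by congr 1; omega
        _ = t % L := Nat.add_mod_right _ _
    rw [this, Nat.mod_eq_of_lt ht.1]
  · intro t ht
    simp only [mem_filter, mem_range] at ht
    have : ((t + (L - 1)) % L + 1) % L = t % L := by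
      calc ((t + (L - 1)) % L + 1) % L = (t + (L - 1) + 1) % L := Nat.mod_add_mod _ _ _
        _ = (t + L) % L := by congr 1; omega
        _ = t % L := Nat.add_mod_right _ _
    rw [this, Nat.mod_eq_of_lt ht.1]
/-- If along a periodic orbit `ζ*_I < τ/2^|I|` for the input set `I` of `g_k`, and `g_k` has
bias `Λ ≥ 1/2 + ε`, then the fraction of orbit states with `k`-th coordinate `1` exceeds
`1/2 + (1-τ)ε - τ/2`. -/
theorem stmt8 {n : ℕ} (g : (Fin n → Bool) → (Fin n → Bool))
    (L : ℕ) (hL : 0 < L) (s : ℕ → Fin n → Bool)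
    (hstep : ∀ t, g (s t) = s (t + 1))
    (hper : ∀ t, s (t + L) = s t)
    (hdistinct : Set.InjOn s (Finset.range L))
    (k : Fin n) (I : Finset (Fin n))
    (hI : ∀ i, BoolFunDependsOn (fun x => g x k) i ↔ i ∈ I)
    (ε : ℝ) (hε0 : 0 < ε)
    (hbias : ((univ.filter fun x : Fin n → Bool => g x k = true).card : ℝ) / 2 ^ n ≥ 1 / 2 + ε)
    (τ : ℝ) (hτ0 : 0 < τ) (hτ1 : τ < 1 / 2)
    (hζ : ∀ σ : Fin n → Bool,
        1 / 2 ^ I.card - (((range L).filter fun t => ∀ i ∈ I, s t i = σ i).card : ℝ) / L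
          < τ / 2 ^ I.card) :
    (((range L).filter fun t => s t k = true).card : ℝ) / L >
      1 / 2 + (1 - τ) * ε - τ / 2 := by
  classical
  have hagree : ∀ x y : Fin n → Bool, (∀ i ∈ I, x i = y i) → g x k = g y k :=
    agree_on_inputs (fun x => g x k) I hI
  set c := I.card with hc
  set P : Finset (Fin n → Bool) := Patterns I with hPdef
  set P₁ : Finset (Fin n → Bool) := P.filter (fun σ => g σ k = true) with hP₁def
  set A : Finset (Fin n → Bool) := univ.filter (fun x => g x k = true) with hAdef
  set fib : (Fin n → Bool) → Finset (Fin n → Bool) :=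
    fun σ => univ.filter (fun x => restr I x = σ) with hfibdef
  have hσ₀ : (fun _ : Fin n => false) ∈ P := by
    simp [hPdef, Patterns]
  set F : ℕ := (fib (fun _ => false)).card with hFdef
  have hfibF : ∀ σ ∈ P, (fib σ).card = F := fun σ hσ => fib_card I hσ hσ₀
  -- splitting a filtered set into fibers over P₁
  have split : ∀ (B : Finset ℕ) (u : ℕ → Fin n → Bool),
      (B.filter fun t => g (u t) k = true).card
        = ∑ σ ∈ P₁, (B.filter fun t => restr I (u t) = σ).card := by
    intro B u
    have h1 : (B.filter fun t => g (u t) k = true).card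
        = ∑ σ ∈ P, (((B.filter fun t => g (u t) k = true)).filter
            fun t => restr I (u t) = σ).card :=
      Finset.card_eq_sum_card_fiberwise (fun t _ => restr_mem I (u t))
    rw [h1, hP₁def, Finset.sum_filter]
    apply Finset.sum_congr rfl
    intro σ hσ
    have hval : ∀ t, restr I (u t) = σ → g (u t) k = g σ k := by
      intro t ht
      exact hagree (u t) σ ((restr_eq_iff hσ).mp ht)
    by_cases hg : g σ k = true
    · rw [if_pos hg]
      congr 1
      rw [Finset.filter_filter]
      apply Finset.filter_congr
      intro t _
      constructor
      · intro h; exact h.2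
      · intro h; exact ⟨by rw [hval t h, hg], h⟩
    · rw [if_neg hg]
      rw [Finset.card_eq_zero, Finset.filter_filter, Finset.filter_eq_empty_iff]
      intro t _ h
      exact hg (by rw [← hval t h.2, h.1])
  -- counting in the cube
  have hAsplit : A.card = P₁.card * F := by
    have h0 : A.card = (univ.filter fun x : Fin n → Bool => g x k = true).card := rfl
    have h1 : A.card = ∑ σ ∈ P, ((A.filter fun x => restr I x = σ)).card :=
      Finset.card_eq_sum_card_fiberwise (fun x _ => restr_mem I x)
    have h2 : ∀ σ ∈ P, ((A.filter fun x => restr I x = σ)).card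
        = if g σ k = true then F else 0 := by
      intro σ hσ
      by_cases hg : g σ k = true
      · rw [if_pos hg, ← hfibF σ hσ]
        congr 1
        ext x
        simp only [hAdef, hfibdef, mem_filter, mem_univ, true_and, and_iff_right_iff_imp]
        intro hx
        rw [hagree x σ ((restr_eq_iff hσ).mp hx), hg]
      · rw [if_neg hg, Finset.card_eq_zero, Finset.filter_eq_empty_iff]
        intro x hx
        simp only [hAdef, mem_filter, mem_univ, true_and] at hx
        intro hr
        exact hg (by rw [← hagree x σ ((restr_eq_iff hσ).mp hr), hx])
    rw [h1, Finset.sum_congr rfl h2, ← Finset.sum_filter, Finset.sum_const, smul_eq_mul]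
  have hcube : 2 ^ n = 2 ^ c * F := by
    have h1 : (univ : Finset (Fin n → Bool)).card = ∑ σ ∈ P, (fib σ).card :=
      Finset.card_eq_sum_card_fiberwise (fun x _ => restr_mem I x)
    have h2 : (univ : Finset (Fin n → Bool)).card = 2 ^ n := by
      simp [Finset.card_univ]
    have h3 : ∑ σ ∈ P, (fib σ).card = P.card * F := by
      rw [Finset.sum_congr rfl hfibF, Finset.sum_const, smul_eq_mul]
    rw [← h2, h1, h3, hPdef, card_patterns]
  -- bias in terms of patterns
  have hpow_pos : (0:ℝ) < 2 ^ c := by positivity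
  have hpown_pos : (0:ℝ) < 2 ^ n := by positivity
  have hbias2 : ((P₁.card : ℝ)) / 2 ^ c ≥ 1 / 2 + ε := by
    have hkey : (A.card : ℝ) * 2 ^ c = (P₁.card : ℝ) * 2 ^ n := by
      have : A.card * 2 ^ c = P₁.card * 2 ^ n := by
        rw [hAsplit, hcube]; ring
      exact_mod_cast congrArg (Nat.cast : ℕ → ℝ) this
    have h4 : (A.card : ℝ) / 2 ^ n = (P₁.card : ℝ) / 2 ^ c := by
      field_simp
      linarith [hkey]
    calc ((P₁.card : ℝ)) / 2 ^ c = (A.card : ℝ) / 2 ^ n := h4.symm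
      _ ≥ 1 / 2 + ε := hbias
  have hP₁ne : P₁.Nonempty := by
    rw [← Finset.card_pos]
    rcases Nat.eq_zero_or_pos P₁.card with h | h
    · exfalso
      rw [h] at hbias2
      norm_num at hbias2
      linarith
    · exact h
  -- orbit counting
  have hTk : (((range L).filter fun t => s t k = true)).card
      = (((range L).filter fun t => g (s t) k = true)).card := by
    rw [show ((range L).filter fun t => g (s t) k = true)
        = ((range L).filter fun t => s (t + 1) k = true) from ?_]
    · exact (orbit_shift hL s hper (fun x => x k = true)).symm
    · apply Finset.filter_congr
      intro t _
      rw [hstep t]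
  have hTsplit : (((range L).filter fun t => g (s t) k = true)).card
      = ∑ σ ∈ P₁, (((range L).filter fun t => restr I (s t) = σ)).card := split (range L) s
  -- per-pattern lower bound
  have hLpos : (0:ℝ) < L := by exact_mod_cast hL
  have hNf : ∀ σ ∈ P₁, (1 - τ) / 2 ^ c
      < ((((range L).filter fun t => restr I (s t) = σ)).card : ℝ) / L := by
    intro σ hσ₁
    have hσ : σ ∈ P := Finset.mem_filter.mp hσ₁ |>.1
    have heqf : ((range L).filter fun t => ∀ i ∈ I, s t i = σ i)
        = ((range L).filter fun t => restr I (s t) = σ) := by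
      apply Finset.filter_congr
      intro t _
      exact (restr_eq_iff hσ).symm
    have := hζ σ
    rw [heqf] at this
    have hsub : (1 - τ) / 2 ^ c = 1 / 2 ^ c - τ / 2 ^ c := by ring
    rw [hsub]
    linarith
  -- put it together
  have hsum : (∑ σ ∈ P₁, ((((range L).filter fun t => restr I (s t) = σ)).card : ℝ) / L)
      > ∑ _σ ∈ P₁, (1 - τ) / 2 ^ c :=
    Finset.sum_lt_sum_of_nonempty hP₁ne hNf
  have hconst : (∑ _σ ∈ P₁, (1 - τ) / 2 ^ c : ℝ) = (P₁.card : ℝ) * ((1 - τ) / 2 ^ c) := by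
    rw [Finset.sum_const, nsmul_eq_mul]
  have hfin : ((((range L).filter fun t => s t k = true)).card : ℝ) / L
      = ∑ σ ∈ P₁, ((((range L).filter fun t => restr I (s t) = σ)).card : ℝ) / L := by
    rw [hTk, hTsplit]
    push_cast
    rw [Finset.sum_div]
  have hlast : (P₁.card : ℝ) * ((1 - τ) / 2 ^ c) ≥ (1 / 2 + ε) * (1 - τ) := by
    have h1τ : (0:ℝ) ≤ 1 - τ := by linarith
    calc (P₁.card : ℝ) * ((1 - τ) / 2 ^ c) = ((P₁.card : ℝ) / 2 ^ c) * (1 - τ) := by ring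
      _ ≥ (1 / 2 + ε) * (1 - τ) := mul_le_mul_of_nonneg_right hbias2 h1τ
  rw [hfin]
  nlinarith [hsum, hconst, hlast]
end

section
/- Let δ > 0 and c > 2^{1−δ}. Then for all sufficiently large n, no n-dimensional Boolean system (Π, g) whose read-only part R(g) satisfies |R(g)| ≥ δn can have a periodic orbit of length ≥ c^n. -/
open Finset

/-- `T` is a generalized read-only tape of the Boolean system `g`. -/
def IsTape {n : ℕ} (g : (Fin n → Bool) → (Fin n → Bool)) (T : Finset (Fin n)) : Prop :=
  ∃ (m : ℕ) (k : ℕ → Fin n), 0 < m ∧ (∀ i, k (i + m) = k i) ∧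
    Set.InjOn k (Finset.range m) ∧ T = (Finset.range m).image k ∧
    ∀ i, (∀ s, g s (k (i + 1)) = s (k i)) ∨ (∀ s, g s (k (i + 1)) = !(s (k i)))

/-- The read-only part of `g`: the union of all its generalized read-only tapes. -/
def readOnlyPart {n : ℕ} (g : (Fin n → Bool) → (Fin n → Bool)) : Set (Fin n) :=
  {x | ∃ T, IsTape g T ∧ x ∈ T}

section Tapes

variable {n : ℕ} {g : (Fin n → Bool) → (Fin n → Bool)}

private lemma pred_unique {x y y' : Fin n}
    (h : (∀ s, g s x = s y) ∨ (∀ s, g s x = !(s y)))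
    (h' : (∀ s, g s x = s y') ∨ (∀ s, g s x = !(s y'))) : y = y' := by
  by_contra hne
  have hyy' : y' ≠ y := fun h0 => hne h0.symm
  rcases h with h | h <;> rcases h' with h' | h'
  · have := (h (fun z => decide (z = y))).symm.trans (h' (fun z => decide (z = y)))
    simp [hyy'] at this
  · have := (h (fun _ => false)).symm.trans (h' (fun _ => false))
    simp at this
  · have := (h (fun _ => false)).symm.trans (h' (fun _ => false))
    simp at this
  · have := (h (fun z => decide (z = y))).symm.trans (h' (fun z => decide (z = y)))
    simp [hyy'] at this

private lemma k_add_mul {m : ℕ} {k : ℕ → Fin n} (hper : ∀ i, k (i + m) = k i) :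
    ∀ (j q : ℕ), k (j + q * m) = k j := by
  intro j q
  induction q with
  | zero => simp
  | succ q ih => rw [Nat.succ_mul, ← Nat.add_assoc, hper, ih]

private lemma k_mem {m : ℕ} {k : ℕ → Fin n} {T : Finset (Fin n)} (hm : 0 < m)
    (hper : ∀ i, k (i + m) = k i) (hT : T = (Finset.range m).image k) (j : ℕ) : k j ∈ T := by
  subst hT
  refine Finset.mem_image.mpr ⟨j % m, Finset.mem_range.mpr (Nat.mod_lt _ hm), ?_⟩
  have h := k_add_mul hper (j % m) (j / m)
  rw [Nat.mod_add_div'] at h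
  exact h.symm

private lemma tape_shift {k : ℕ → Fin n}
    (hstep : ∀ i, (∀ s, g s (k (i + 1)) = s (k i)) ∨ (∀ s, g s (k (i + 1)) = !(s (k i)))) :
    ∀ (r i : ℕ), ∃ b : Bool, ∀ (s0 : Fin n → Bool) (t : ℕ),
      g^[t + r] s0 (k (i + r)) = xor b (g^[t] s0 (k i)) := by
  intro r
  induction r with
  | zero => exact fun i => ⟨false, fun s0 t => by simp⟩
  | succ r ih =>
    intro i
    obtain ⟨b, hb⟩ := ih i
    have hit : ∀ (s0 : Fin n → Bool) (t : ℕ),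
        g^[t + (r + 1)] s0 (k (i + (r + 1))) = g (g^[t + r] s0) (k ((i + r) + 1)) := by
      intro s0 t
      show g^[(t + r) + 1] s0 (k ((i + r) + 1)) = _
      rw [Function.iterate_succ_apply']
    rcases hstep (i + r) with h | h
    · refine ⟨b, fun s0 t => ?_⟩
      rw [hit, h, hb]
    · refine ⟨!b, fun s0 t => ?_⟩
      rw [hit, h, hb]
      cases b <;> cases g^[t] s0 (k i) <;> rfl

private lemma tape_period {m : ℕ} {k : ℕ → Fin n} (hper : ∀ i, k (i + m) = k i)
    (hstep : ∀ i, (∀ s, g s (k (i + 1)) = s (k i)) ∨ (∀ s, g s (k (i + 1)) = !(s (k i)))) :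
    ∀ (s0 : Fin n → Bool) (t i : ℕ), g^[t + 2 * m] s0 (k i) = g^[t] s0 (k i) := by
  intro s0 t i
  obtain ⟨b1, h1⟩ := tape_shift hstep m i
  obtain ⟨b2, h2⟩ := tape_shift hstep m (i + m)
  have hbb : b1 = b2 := by
    have e1 := h1 (fun _ => false) 0
    have e2 := h2 (fun _ => false) 0
    rw [hper (i + m)] at e2
    simp only [Nat.zero_add, Function.iterate_zero_apply, Bool.xor_false] at e1 e2
    rw [← e1, ← e2]
  have e3 := h2 s0 (t + m)
  rw [h1 s0 t, hper (i + m), hper i] at e3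
  have ht : t + 2 * m = t + m + m := by ring
  rw [ht, e3, ← hbb]
  cases b1 <;> cases g^[t] s0 (k i) <;> rfl

private lemma tape_eq {T T' : Finset (Fin n)} (hT : IsTape g T) (hT' : IsTape g T')
    {x : Fin n} (hx : x ∈ T) (hx' : x ∈ T') : T = T' := by
  obtain ⟨m, k, hm, hper, hinj, hTim, hstep⟩ := hT
  obtain ⟨m', k', hm', hper', hinj', hTim', hstep'⟩ := hT'
  obtain ⟨i0, hi0, hki0⟩ := Finset.mem_image.mp (hTim ▸ hx)
  obtain ⟨j0, hj0, hkj0⟩ := Finset.mem_image.mp (hTim' ▸ hx')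
  set K := m * m' with hK
  have hKm : m ≤ K := Nat.le_mul_of_pos_right m hm'
  have hKm' : m' ≤ K := Nat.le_mul_of_pos_left m' hm
  set A := i0 + K with hA
  set B := j0 + K with hB
  have hkA : k A = x := by
    rw [hA, hK, Nat.mul_comm, k_add_mul hper]; exact hki0
  have hkB : k' B = x := by
    rw [hB, hK, k_add_mul hper']; exact hkj0
  have key : ∀ d, d ≤ K → k (A - d) = k' (B - d) := by
    intro d
    induction d with
    | zero => intro _; simp [hkA, hkB]
    | succ d ih =>
      intro hd
      have hih := ih (Nat.le_of_succ_le hd)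
      have hA1 : A - d = (A - (d + 1)) + 1 := by omega
      have hB1 : B - d = (B - (d + 1)) + 1 := by omega
      have p1 := hstep (A - (d + 1))
      have p2 := hstep' (B - (d + 1))
      rw [← hA1] at p1
      rw [← hB1, ← hih] at p2
      exact pred_unique p1 p2
  have sub1 : T ⊆ T' := by
    intro y hy
    obtain ⟨i, hiR, hki⟩ := Finset.mem_image.mp (hTim ▸ hy)
    have him : i < m := Finset.mem_range.mp hiR
    set d := (A - i) % m with hd
    have hdlt : d < m := Nat.mod_lt _ hm
    have hdle : d ≤ K := le_of_lt (lt_of_lt_of_le hdlt hKm)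
    set q := m * ((A - i) / m) with hq
    have hdiv : q + d = A - i := by rw [hq, hd]; exact Nat.div_add_mod (A - i) m
    have hAd : A - d = i + q := by omega
    have hkq : k (i + q) = k i := by
      rw [hq, Nat.mul_comm]; exact k_add_mul hper i _
    have : y = k' (B - d) := by rw [← key d hdle, hAd, hkq, hki]
    rw [this]; exact k_mem hm' hper' hTim' _
  have sub2 : T' ⊆ T := by
    intro y hy
    obtain ⟨j, hjR, hkj⟩ := Finset.mem_image.mp (hTim' ▸ hy)
    have hjm : j < m' := Finset.mem_range.mp hjR
    set d := (B - j) % m' with hd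
    have hdlt : d < m' := Nat.mod_lt _ hm'
    have hdle : d ≤ K := le_of_lt (lt_of_lt_of_le hdlt hKm')
    set q := m' * ((B - j) / m') with hq
    have hdiv : q + d = B - j := by rw [hq, hd]; exact Nat.div_add_mod (B - j) m'
    have hBd : B - d = j + q := by omega
    have hkq : k' (j + q) = k' j := by
      rw [hq, Nat.mul_comm]; exact k_add_mul hper' j _
    have : y = k (A - d) := by rw [key d hdle, hBd, hkq, hkj]
    rw [this]; exact k_mem hm hper hTim _
  exact Finset.Subset.antisymm sub1 sub2

end Tapes

private lemma sum_le_prod_of_two_le : ∀ F : Finset ℕ, (∀ x ∈ F, 2 ≤ x) →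
    ∑ x ∈ F, x ≤ ∏ x ∈ F, x := by
  intro F
  induction F using Finset.induction_on with
  | empty => intro _; simp
  | @insert a F ha ih =>
    intro h
    rw [Finset.sum_insert ha, Finset.prod_insert ha]
    have h2a : 2 ≤ a := h a (Finset.mem_insert_self a F)
    have hS := ih (fun x hx => h x (Finset.mem_insert_of_mem hx))
    rcases F.eq_empty_or_nonempty with rfl | hne
    · simp
    · have hP2 : 2 ≤ ∏ x ∈ F, x := by
        obtain ⟨b, hb⟩ := hne
        calc 2 ≤ b := h b (Finset.mem_insert_of_mem hb)
          _ ≤ ∏ x ∈ F, x := Finset.single_le_prod'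
            (fun x hx => le_trans one_le_two (h x (Finset.mem_insert_of_mem hx))) hb
      nlinarith [hS, hP2, h2a]

private lemma card_sq_le_two_mul_sum : ∀ F : Finset ℕ, (∀ x ∈ F, 2 ≤ x) →
    F.card * F.card ≤ 2 * ∑ x ∈ F, x := by
  intro F
  induction F using Finset.strongInduction with
  | _ F ih =>
    intro h
    rcases F.eq_empty_or_nonempty with rfl | hne
    · simp
    · set Mx := F.max' hne with hMx
      have hmem : Mx ∈ F := F.max'_mem hne
      have hsub : F ⊆ Finset.Icc 2 Mx := fun x hx => Finset.mem_Icc.mpr ⟨h x hx, F.le_max' x hx⟩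
      have hcard : F.card ≤ Mx - 1 := by
        have h1 := Finset.card_le_card hsub
        rwa [Nat.card_Icc] at h1
      have hrec := ih (F.erase Mx) (Finset.erase_ssubset hmem)
        (fun x hx => h x (Finset.mem_of_mem_erase hx))
      have hce : (F.erase Mx).card = F.card - 1 := Finset.card_erase_of_mem hmem
      have hsum : ∑ x ∈ F, x = Mx + ∑ x ∈ F.erase Mx, x := (Finset.add_sum_erase F id hmem).symm
      have h2M : 2 ≤ Mx := h Mx hmem
      have hpos : 1 ≤ F.card := Finset.card_pos.mpr hne
      obtain ⟨dc, hdc⟩ : ∃ d, F.card = d + 1 := ⟨F.card - 1, by omega⟩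
      rw [hdc] at hcard ⊢
      rw [hdc] at hce
      have hrec' : dc * dc ≤ 2 * ∑ x ∈ F.erase Mx, x := by
        rw [hce] at hrec; simpa using hrec
      rw [hsum]
      have hdM : dc + 2 ≤ Mx := by omega
      nlinarith [hrec', hdM]

private lemma exists_factorization_le {ι : Type*} (p : ℕ) :
    ∀ (S : Finset ι) (f : ι → ℕ), S.Nonempty → (∀ i ∈ S, f i ≠ 0) →
      ∃ i ∈ S, (S.lcm f).factorization p ≤ (f i).factorization p := by
  classical
  intro S
  induction S using Finset.induction_on with
  | empty => intro f h; exact absurd h (by simp)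
  | @insert a S ha ih =>
    intro f _ hpos
    have hfa : f a ≠ 0 := hpos a (Finset.mem_insert_self a S)
    rcases S.eq_empty_or_nonempty with rfl | hne
    · refine ⟨a, Finset.mem_insert_self a _, ?_⟩
      rw [Finset.lcm_insert, Finset.lcm_empty, lcm_one_right]
      simp
    · obtain ⟨i, hiS, hile⟩ := ih f hne (fun j hj => hpos j (Finset.mem_insert_of_mem hj))
      have hl0 : S.lcm f ≠ 0 := by
        rw [Ne, Finset.lcm_eq_zero_iff]
        intro h0
        obtain ⟨j, hj, hj0⟩ := h0
        exact hpos j (Finset.mem_insert_of_mem hj) hj0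
      rw [Finset.lcm_insert]
      have hfac : (lcm (f a) (S.lcm f)).factorization p
          = max ((f a).factorization p) ((S.lcm f).factorization p) := by
        rw [lcm_eq_nat_lcm, Nat.factorization_lcm hfa hl0]
        rfl
      rcases le_total ((f a).factorization p) ((S.lcm f).factorization p) with hle | hle
      · exact ⟨i, Finset.mem_insert_of_mem hiS, by rw [hfac, max_eq_right hle]; exact hile⟩
      · exact ⟨a, Finset.mem_insert_self a S, by rw [hfac, max_eq_left hle]⟩

private lemma lcm_le_sum_pow {ι : Type*} (S : Finset ι) (f : ι → ℕ) (hpos : ∀ i ∈ S, 0 < f i) :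
    S.lcm f ≤ (∑ i ∈ S, f i) ^ Nat.sqrt (2 * ∑ i ∈ S, f i) := by
  classical
  rcases S.eq_empty_or_nonempty with rfl | hSne
  · simp
  set N := ∑ i ∈ S, f i with hN
  have hN1 : 1 ≤ N := Finset.sum_pos hpos hSne
  set M := S.lcm f with hM
  have hM0 : M ≠ 0 := by
    rw [hM, Ne, Finset.lcm_eq_zero_iff]
    intro h0
    obtain ⟨j, hj, hj0⟩ := h0
    exact (hpos j hj).ne' hj0
  have hwit : ∀ p ∈ M.primeFactors, ∃ i ∈ S, p ^ M.factorization p ∣ f i := by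
    intro p hp
    obtain ⟨i, hiS, hile⟩ := exists_factorization_le p S f hSne
      (fun i hi => (hpos i hi).ne')
    exact ⟨i, hiS, dvd_trans (pow_dvd_pow p hile) (Nat.ordProj_dvd (f i) p)⟩
  obtain ⟨i0, hi0⟩ := hSne
  set cfn : ℕ → ι := fun p =>
    if h : ∃ i ∈ S, p ^ M.factorization p ∣ f i then h.choose else i0 with hcfn
  have hcS : ∀ p ∈ M.primeFactors, cfn p ∈ S ∧ p ^ M.factorization p ∣ f (cfn p) := by
    intro p hp
    have h := hwit p hp
    rw [hcfn]
    simp only [dif_pos h]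
    exact h.choose_spec
  have hfiN : ∀ i ∈ S, f i ≤ N :=
    fun i hi => Finset.single_le_sum (fun j _ => Nat.zero_le (f j)) hi
  have hQsum : ∑ p ∈ M.primeFactors, p ≤ N := by
    rw [← Finset.sum_fiberwise_of_maps_to (fun p hp => (hcS p hp).1) (fun p => p)]
    rw [hN]
    apply Finset.sum_le_sum
    intro i hi
    set F := M.primeFactors.filter (fun p => cfn p = i) with hF
    have hFP : ∀ p ∈ F, p.Prime := fun p hp =>
      Nat.prime_of_mem_primeFactors (Finset.mem_filter.mp hp).1
    have hFd : ∀ p ∈ F, p ∣ f i := by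
      intro p hp
      obtain ⟨hpQ, hpc⟩ := Finset.mem_filter.mp hp
      have hdvd := (hcS p hpQ).2
      rw [hpc] at hdvd
      have hν : M.factorization p ≠ 0 := by
        have := Nat.support_factorization M ▸ hpQ
        exact Finsupp.mem_support_iff.mp this
      exact dvd_trans (dvd_pow_self p hν) hdvd
    calc ∑ p ∈ F, p ≤ ∏ p ∈ F, p :=
          sum_le_prod_of_two_le F (fun p hp => (hFP p hp).two_le)
      _ ≤ f i := Nat.le_of_dvd (hpos i hi)
          (Finset.prod_primes_dvd (f i) (fun p hp => (hFP p hp).prime) hFd)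
  have hQcard : M.primeFactors.card ≤ Nat.sqrt (2 * N) := by
    rw [Nat.le_sqrt]
    calc M.primeFactors.card * M.primeFactors.card ≤ 2 * ∑ p ∈ M.primeFactors, p :=
          card_sq_le_two_mul_sum _ (fun p hp => (Nat.prime_of_mem_primeFactors hp).two_le)
      _ ≤ 2 * N := by omega
  calc M = ∏ p ∈ M.primeFactors, p ^ M.factorization p := by
        nth_rewrite 1 [← Nat.factorization_prod_pow_eq_self hM0]
        rw [Finsupp.prod, Nat.support_factorization]
    _ ≤ N ^ M.primeFactors.card := Finset.prod_le_pow_card _ _ _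
        (fun p hp => by
          obtain ⟨i, hiS, hdvd⟩ := hwit p hp
          exact le_trans (Nat.le_of_dvd (hpos i hiS) hdvd) (hfiN i hiS))
    _ ≤ N ^ Nat.sqrt (2 * N) := Nat.pow_le_pow_right hN1 hQcard

private lemma orbit_bound {n : ℕ} (g : (Fin n → Bool) → (Fin n → Bool)) (s0 : Fin n → Bool)
    (L P : ℕ) (hP : 0 < P)
    (hperiod : ∀ x, x ∈ readOnlyPart g → ∀ t, g^[t + P] s0 x = g^[t] s0 x)
    (hinj : Set.InjOn (fun t => g^[t] s0) (Finset.range L)) :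
    L ≤ P * 2 ^ (n - (readOnlyPart g).ncard) := by
  classical
  set Rf : Finset (Fin n) := Finset.univ.filter (fun x => x ∈ readOnlyPart g) with hRf
  have hmemRf : ∀ x, x ∈ Rf ↔ x ∈ readOnlyPart g := by
    intro x; simp [hRf]
  have hRRf : readOnlyPart g = ↑Rf := by
    ext x; simp [hmemRf]
  have hncard : (readOnlyPart g).ncard = Rf.card := by
    rw [hRRf, Set.ncard_coe_finset]
  set Φ : ℕ → ℕ × (↥(Rfᶜ) → Bool) :=
    fun t => (t % P, fun x => g^[t] s0 x.1) with hΦ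
  have hmap : ∀ t ∈ Finset.range L,
      Φ t ∈ (Finset.range P) ×ˢ (Finset.univ : Finset (↥(Rfᶜ) → Bool)) := by
    intro t _
    exact Finset.mem_product.mpr ⟨Finset.mem_range.mpr (Nat.mod_lt _ hP), Finset.mem_univ _⟩
  have hinj2 : Set.InjOn Φ ↑(Finset.range L) := by
    intro t1 h1 t2 h2 heq
    have hmod : t1 % P = t2 % P := congrArg Prod.fst heq
    have hfun : (fun x : ↥(Rfᶜ) => g^[t1] s0 x.1) = fun x => g^[t2] s0 x.1 :=
      congrArg Prod.snd heq
    have key : ∀ a b : ℕ, a ≤ b → a % P = b % P → ∀ x ∈ readOnlyPart g,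
        g^[b] s0 x = g^[a] s0 x := by
      intro a b hab hm x hx
      have hdvd : P ∣ b - a := (Nat.modEq_iff_dvd' hab).mp hm
      obtain ⟨q, hq⟩ := hdvd
      have hb : b = a + q * P := by
        have := (Nat.sub_eq_iff_eq_add hab).mp hq
        rw [this]; ring
      have hiter : ∀ (q a : ℕ), g^[a + q * P] s0 x = g^[a] s0 x := by
        intro q
        induction q with
        | zero => simp
        | succ q ih =>
          intro a
          rw [show a + (q + 1) * P = (a + q * P) + P by ring, hperiod x hx (a + q * P), ih]
      rw [hb]; exact hiter q a
    have hstates : g^[t1] s0 = g^[t2] s0 := by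
      funext x
      by_cases hx : x ∈ readOnlyPart g
      · rcases le_total t1 t2 with hle | hle
        · exact (key t1 t2 hle hmod x hx).symm
        · exact key t2 t1 hle hmod.symm x hx
      · have hxc : x ∈ Rfᶜ := by
          rw [Finset.mem_compl, hmemRf]; exact hx
        exact congrFun hfun ⟨x, hxc⟩
    exact hinj h1 h2 hstates
  have hcard := Finset.card_le_card_of_injOn Φ hmap hinj2
  rw [Finset.card_range, Finset.card_product, Finset.card_range, Finset.card_univ] at hcard
  have h1 : Fintype.card (↥(Rfᶜ) → Bool) = 2 ^ (n - Rf.card) := by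
    rw [Fintype.card_fun, Fintype.card_bool, Fintype.card_coe, Finset.card_compl,
      Fintype.card_fin]
  rw [h1] at hcard
  rw [hncard]
  exact hcard

set_option maxHeartbeats 1000000 in
/-- If the read-only part of an `n`-dimensional Boolean system has at least `δn` variables
and `c > 2^(1-δ)`, then for all large `n` the system has no periodic orbit of length `≥ cⁿ`. -/
theorem stmt14 (δ : ℝ) (hδ : 0 < δ) (c : ℝ) (hc : c > 2 ^ ((1 : ℝ) - δ)) :
    ∀ᶠ n : ℕ in Filter.atTop, ∀ g : (Fin n → Bool) → (Fin n → Bool),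
      (Set.ncard (readOnlyPart g) : ℝ) ≥ δ * n →
      ¬ ∃ (s0 : Fin n → Bool) (L : ℕ), 0 < L ∧ g^[L] s0 = s0 ∧
          Set.InjOn (fun t => g^[t] s0) (Finset.range L) ∧ (L : ℝ) ≥ c ^ n := by
  classical
  have h2pos : (0 : ℝ) < 2 ^ ((1 : ℝ) - δ) := Real.rpow_pos_of_pos two_pos _
  set ρ := c / 2 ^ ((1 : ℝ) - δ) with hρdef
  have hρ : 1 < ρ := (one_lt_div h2pos).mpr hc
  have hlρ : 0 < Real.log ρ := Real.log_pos hρ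
  have hεev : ∀ᶠ (x : ℝ) in Filter.atTop,
      ‖Real.log x‖ ≤ (Real.log ρ / 4) * ‖x ^ (1/2 : ℝ)‖ :=
    (isLittleO_log_rpow_atTop (by norm_num : (0:ℝ) < 1/2)).def (by positivity)
  have hev1 : ∀ᶠ n : ℕ in Filter.atTop,
      ‖Real.log (n : ℝ)‖ ≤ (Real.log ρ / 4) * ‖((n : ℝ)) ^ (1/2 : ℝ)‖ :=
    tendsto_natCast_atTop_atTop.eventually hεev
  have hev2 : ∀ᶠ n : ℕ in Filter.atTop, Real.log 2 < (Real.log ρ / 2) * n := by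
    have ht : Filter.Tendsto (fun n : ℕ => (Real.log ρ / 2) * n) Filter.atTop Filter.atTop :=
      (tendsto_natCast_atTop_atTop).const_mul_atTop (by positivity)
    exact ht.eventually_gt_atTop _
  filter_upwards [hev1, hev2, Filter.eventually_ge_atTop 1] with n h1 h2 h3
  intro g hRg
  rintro ⟨s0, L, hL0, -, hinjL, hLc⟩
  set 𝒯 : Finset (Finset (Fin n)) := Finset.univ.filter (fun T => IsTape g T) with h𝒯
  have hmem𝒯 : ∀ T, T ∈ 𝒯 ↔ IsTape g T := by intro T; simp [h𝒯]
  set Rf : Finset (Fin n) := 𝒯.biUnion id with hRfdef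
  have hRRf : readOnlyPart g = ↑Rf := by
    ext x
    simp only [hRfdef, Finset.coe_biUnion, Set.mem_iUnion, Finset.mem_coe, id]
    constructor
    · rintro ⟨T, hT, hx⟩
      exact ⟨T, by simpa using (hmem𝒯 T).mpr hT, hx⟩
    · rintro ⟨T, hT, hx⟩
      exact ⟨T, (hmem𝒯 T).mp (by simpa using hT), hx⟩
  set N := Rf.card with hNdef
  have hRN : (readOnlyPart g).ncard = N := by rw [hRRf, Set.ncard_coe_finset]
  have hNn : N ≤ n := by
    have := Finset.card_le_univ Rf
    rwa [Fintype.card_fin] at this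
  have hδN : δ * n ≤ (N : ℝ) := by rw [← hRN]; exact hRg
  have hsum : ∑ T ∈ 𝒯, T.card = N := by
    rw [hNdef, hRfdef]
    refine (Finset.card_biUnion ?_).symm
    intro T hT T' hT' hne
    show Disjoint T T'
    rw [Finset.disjoint_left]
    intro x hxT hxT'
    exact hne (tape_eq ((hmem𝒯 T).mp hT) ((hmem𝒯 T').mp hT') hxT hxT')
  have hcardpos : ∀ T ∈ 𝒯, 0 < T.card := by
    intro T hT
    obtain ⟨m, k, hm, hper, hinj, hTim, hstep⟩ := (hmem𝒯 T).mp hT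
    exact Finset.card_pos.mpr ⟨k 0, k_mem hm hper hTim 0⟩
  set M := 𝒯.lcm Finset.card with hMdef
  set r := Nat.sqrt (2 * N) with hrdef
  have hMbound : M ≤ N ^ r := by
    have := lcm_le_sum_pow 𝒯 Finset.card hcardpos
    rwa [hsum] at this
  have hMne : M ≠ 0 := by
    rw [hMdef, Ne, Finset.lcm_eq_zero_iff]
    intro h0
    obtain ⟨T, hT, hT0⟩ := h0
    exact (hcardpos T hT).ne' hT0
  have hMpos : 0 < M := Nat.pos_of_ne_zero hMne
  have hper2M : ∀ x, x ∈ readOnlyPart g → ∀ t, g^[t + 2 * M] s0 x = g^[t] s0 x := by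
    intro x hx t
    obtain ⟨T, hT, hxT⟩ := hx
    obtain ⟨m, k, hm, hper, hinj, hTim, hstep⟩ := hT
    obtain ⟨i, hi, hki⟩ := Finset.mem_image.mp (hTim ▸ hxT)
    have hmcard : T.card = m := by
      rw [hTim, Finset.card_image_of_injOn hinj, Finset.card_range]
    have hT𝒯 : T ∈ 𝒯 := (hmem𝒯 T).mpr ⟨m, k, hm, hper, hinj, hTim, hstep⟩
    obtain ⟨q, hq⟩ : T.card ∣ M := Finset.dvd_lcm hT𝒯
    have h2M : 2 * M = q * (2 * m) := by rw [hq, hmcard]; ring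
    have hone : ∀ t, g^[t + 2 * m] s0 x = g^[t] s0 x := by
      intro t; rw [← hki]; exact tape_period hper hstep s0 t i
    have hiter : ∀ (q t : ℕ), g^[t + q * (2 * m)] s0 x = g^[t] s0 x := by
      intro q
      induction q with
      | zero => simp
      | succ q ih =>
        intro t
        rw [show t + (q + 1) * (2 * m) = (t + q * (2 * m)) + 2 * m by ring, hone, ih]
    rw [h2M]; exact hiter q t
  have hLb : L ≤ 2 * M * 2 ^ (n - N) := by
    have := orbit_bound g s0 L (2 * M) (by positivity) hper2M hinjL
    rwa [hRN] at this
  have hLbN : L ≤ 2 * N ^ r * 2 ^ (n - N) :=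
    le_trans hLb (Nat.mul_le_mul_right _ (Nat.mul_le_mul_left _ hMbound))
  -- real analysis
  have hn1 : (1 : ℝ) ≤ (n : ℝ) := by exact_mod_cast h3
  have hnpos : (0 : ℝ) < n := lt_of_lt_of_le one_pos hn1
  have hlogn : 0 ≤ Real.log n := Real.log_nonneg hn1
  have hrsq : (r : ℝ) ≤ Real.sqrt (2 * n) := by
    rw [show (2 : ℝ) * n = ((2 * n : ℕ) : ℝ) by push_cast; ring]
    have hr2 : r * r ≤ 2 * n := le_trans (Nat.sqrt_le (2 * N)) (by omega)
    have := Real.sqrt_le_sqrt (show ((r * r : ℕ) : ℝ) ≤ ((2 * n : ℕ) : ℝ) by exact_mod_cast hr2)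
    calc (r : ℝ) = Real.sqrt ((r * r : ℕ) : ℝ) := by
          push_cast
          rw [Real.sqrt_mul_self (Nat.cast_nonneg r)]
      _ ≤ _ := this
  have hlogbound : Real.log n ≤ (Real.log ρ / 4) * Real.sqrt n := by
    rw [Real.norm_eq_abs, Real.norm_eq_abs] at h1
    have habs : |((n : ℝ)) ^ (1/2 : ℝ)| = Real.sqrt n := by
      rw [← Real.sqrt_eq_rpow, abs_of_nonneg (Real.sqrt_nonneg _)]
    rw [habs] at h1
    exact le_trans (le_abs_self _) h1
  have hsq2 : Real.sqrt 2 ≤ 2 := by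
    have h4 : Real.sqrt 4 = 2 := by
      rw [show (4:ℝ) = 2 ^ 2 by norm_num, Real.sqrt_sq (by norm_num : (0:ℝ) ≤ 2)]
    calc Real.sqrt 2 ≤ Real.sqrt 4 := Real.sqrt_le_sqrt (by norm_num)
      _ = 2 := h4
  have hnn : Real.sqrt n * Real.sqrt n = n := Real.mul_self_sqrt (le_of_lt hnpos)
  have key1 : (r : ℝ) * Real.log n ≤ (Real.log ρ / 2) * n := by
    have hs2n : Real.sqrt (2 * n) = Real.sqrt 2 * Real.sqrt n :=
      Real.sqrt_mul (by norm_num) n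
    calc (r : ℝ) * Real.log n ≤ (Real.sqrt 2 * Real.sqrt n) * Real.log n := by
          rw [← hs2n]; exact mul_le_mul_of_nonneg_right hrsq hlogn
      _ ≤ (Real.sqrt 2 * Real.sqrt n) * ((Real.log ρ / 4) * Real.sqrt n) := by
          apply mul_le_mul_of_nonneg_left hlogbound
          positivity
      _ = (Real.sqrt 2 * (Real.log ρ / 4)) * (Real.sqrt n * Real.sqrt n) := by ring
      _ = (Real.sqrt 2 * (Real.log ρ / 4)) * n := by rw [hnn]
      _ ≤ (2 * (Real.log ρ / 4)) * n := by
          apply mul_le_mul_of_nonneg_right _ (le_of_lt hnpos)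
          apply mul_le_mul_of_nonneg_right hsq2
          positivity
      _ = (Real.log ρ / 2) * n := by ring
  have key2 : Real.log 2 + (r : ℝ) * Real.log n < Real.log ρ * n := by linarith
  have keyA : 2 * (n : ℝ) ^ r < ρ ^ n := by
    have hA : 2 * (n : ℝ) ^ r = Real.exp (Real.log 2 + (r : ℝ) * Real.log n) := by
      rw [Real.exp_add, Real.exp_log two_pos, Real.exp_nat_mul, Real.exp_log hnpos]
    have hB : ρ ^ n = Real.exp (Real.log ρ * n) := by
      rw [mul_comm, Real.exp_nat_mul, Real.exp_log (lt_trans one_pos hρ)]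
    rw [hA, hB]
    exact Real.exp_lt_exp.mpr key2
  have hcast : (L : ℝ) ≤ 2 * (N : ℝ) ^ r * (2 : ℝ) ^ (n - N : ℕ) := by
    exact_mod_cast hLbN
  have hpow1 : ((N : ℝ)) ^ r ≤ ((n : ℝ)) ^ r :=
    pow_le_pow_left₀ (Nat.cast_nonneg N) (Nat.cast_le.mpr hNn) r
  have hpow2 : ((2 : ℝ)) ^ (n - N : ℕ) ≤ (2 : ℝ) ^ (((1 : ℝ) - δ) * n) := by
    rw [← Real.rpow_natCast 2 (n - N)]
    apply Real.rpow_le_rpow_of_exponent_le one_le_two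
    rw [Nat.cast_sub hNn]
    linarith [hδN]
  have hBpos : (0 : ℝ) < (2 : ℝ) ^ (((1 : ℝ) - δ) * n) := Real.rpow_pos_of_pos two_pos _
  have step1 : (L : ℝ) ≤ (2 * (n : ℝ) ^ r) * (2 : ℝ) ^ (((1 : ℝ) - δ) * n) := by
    calc (L : ℝ) ≤ 2 * (N : ℝ) ^ r * (2 : ℝ) ^ (n - N : ℕ) := hcast
      _ ≤ (2 * (n : ℝ) ^ r) * (2 : ℝ) ^ (((1 : ℝ) - δ) * n) := by
        apply mul_le_mul (by linarith [hpow1]) hpow2 (by positivity) (by positivity)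
  have step2 : (2 * (n : ℝ) ^ r) * (2 : ℝ) ^ (((1 : ℝ) - δ) * n)
      < ρ ^ n * (2 : ℝ) ^ (((1 : ℝ) - δ) * n) :=
    mul_lt_mul_of_pos_right keyA hBpos
  have step3 : ρ ^ n * (2 : ℝ) ^ (((1 : ℝ) - δ) * n) = c ^ n := by
    have e1 : (2 : ℝ) ^ (((1 : ℝ) - δ) * n) = ((2 : ℝ) ^ ((1 : ℝ) - δ)) ^ (n : ℕ) := by
      rw [Real.rpow_mul (by norm_num : (0:ℝ) ≤ 2), Real.rpow_natCast]
    rw [e1, ← mul_pow, hρdef, div_mul_cancel₀]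
    exact h2pos.ne'
  have hfinal : (L : ℝ) < c ^ n := by
    rw [← step3]
    exact lt_of_le_of_lt step1 step2
  exact absurd hLc (not_le.mpr hfinal)
end

section
/- Suppose for every sufficiently large even n there exists an (n/2)-dimensional cooperative Boolean system, with indegree and outdegree at most 2 in its digraph, having a periodic orbit of length at least c^{2·(n/2)} = c^n where c² < 2. Then for every 0 < c < √2 and sufficiently large n there exists an n-dimensional cooperative Boolean system with indegree and outdegree at most 2, all of whose regulatory functions are strictly quadratic (of the form s_i ∧ s_j or s_i ∨ s_j with i ≠ j), having a periodic orbit of length at least c^n. -/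
/-- `φ` depends on input variable `i`. -/
def DependsOnVar {n : ℕ} (φ : (Fin n → Bool) → Bool) (i : Fin n) : Prop :=
  ∃ s r : Fin n → Bool, (∀ j, j ≠ i → s j = r j) ∧ φ s ≠ φ r

/-- `g` is cooperative: monotone for the coordinatewise order. -/
def Cooperative {n : ℕ} (g : (Fin n → Bool) → (Fin n → Bool)) : Prop :=
  ∀ s r : Fin n → Bool, (∀ i, s i ≤ r i) → ∀ i, g s i ≤ g r i

/-- Every indegree of the digraph of `g` is at most `d`. -/
def IndegLE {n : ℕ} (g : (Fin n → Bool) → (Fin n → Bool)) (d : ℕ) : Prop :=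
  ∀ k, Set.ncard {i | DependsOnVar (fun x => g x k) i} ≤ d

/-- Every outdegree of the digraph of `g` is at most `d`. -/
def OutdegLE {n : ℕ} (g : (Fin n → Bool) → (Fin n → Bool)) (d : ℕ) : Prop :=
  ∀ i, Set.ncard {k | DependsOnVar (fun x => g x k) i} ≤ d

/-- `g` has a periodic orbit of length at least `ℓ`. -/
def HasOrbitOfLength {n : ℕ} (g : (Fin n → Bool) → (Fin n → Bool)) (ℓ : ℝ) : Prop :=
  ∃ (s0 : Fin n → Bool) (L : ℕ), 0 < L ∧ g^[L] s0 = s0 ∧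
    Set.InjOn (fun t => g^[t] s0) (Finset.range L) ∧ (L : ℝ) ≥ ℓ

namespace Stmt16Aux

open Finset

variable {m : ℕ}

lemma not_dependsOn_update (φ : (Fin m → Bool) → Bool) (i : Fin m)
    (h : ¬ DependsOnVar φ i) (s : Fin m → Bool) (v : Bool) :
    φ (Function.update s i v) = φ s := by
  by_contra hne
  exact h ⟨Function.update s i v, s, fun j hj => Function.update_of_ne hj _ _, hne⟩

lemma determined (φ : (Fin m → Bool) → Bool) (D : Finset (Fin m)) :
    ∀ s r : Fin m → Bool, (∀ i, DependsOnVar φ i → s i = r i) →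
      (∀ i, s i ≠ r i → i ∈ D) → φ s = φ r := by
  induction D using Finset.induction_on with
  | empty =>
      intro s r _ h2
      have hsr : s = r := funext fun i => by
        by_contra hne
        exact absurd (h2 i hne) (Finset.notMem_empty i)
      rw [hsr]
  | @insert a D ha ih =>
      intro s r h1 h2
      by_cases hsr : s a = r a
      · refine ih s r h1 fun i hi => ?_
        rcases Finset.mem_insert.mp (h2 i hi) with h | h
        · exact absurd (h ▸ hsr) hi
        · exact h
      · have hnd : ¬ DependsOnVar φ a := fun hd => hsr (h1 a hd)
        have key : φ (Function.update s a (r a)) = φ s :=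
          not_dependsOn_update φ a hnd s (r a)
        have key2 : φ (Function.update s a (r a)) = φ r := by
          refine ih _ r (fun i hi => ?_) (fun i hi => ?_)
          · by_cases hia : i = a
            · subst hia; simp
            · rw [Function.update_of_ne hia]; exact h1 i hi
          · by_cases hia : i = a
            · subst hia; simp at hi
            · rw [Function.update_of_ne hia] at hi
              rcases Finset.mem_insert.mp (h2 i hi) with h | h
              · exact absurd h hia
              · exact h
        rw [← key, key2]

lemma agree_on_deps (φ : (Fin m → Bool) → Bool) (s r : Fin m → Bool)
    (h : ∀ i, DependsOnVar φ i → s i = r i) : φ s = φ r :=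
  determined φ Finset.univ s r h (fun i _ => Finset.mem_univ i)

lemma bool1_classify : ∀ F : Bool → Bool,
    F false ≤ F true → F false ≠ F true → ∀ x, F x = x := by decide

lemma bool2_classify : ∀ F : Bool → Bool → Bool,
    F false false ≤ F false true → F false false ≤ F true false →
    F false true ≤ F true true → F true false ≤ F true true →
    (∃ y, F false y ≠ F true y) → (∃ x, F x false ≠ F x true) →
    ((∀ x y, F x y = (x && y)) ∨ (∀ x y, F x y = (x || y))) := by decide

/-- Normal forms of a regulatory function. -/
inductive BF (m : ℕ) where
  | quad (op : Bool) (a b : Fin m)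
  | mon (a : Fin m)
  | cst (b : Bool)

namespace BF

def eval : BF m → (Fin m → Bool) → Bool
  | quad true a b, u => u a && u b
  | quad false a b, u => u a || u b
  | mon a, u => u a
  | cst b, _ => b

def ins : BF m → Finset (Fin m)
  | quad _ a b => {a, b}
  | mon a => {a}
  | cst _ => ∅

def needN : BF m → ℕ
  | quad .. => 0
  | mon _ => 1
  | cst _ => 2

def okay : BF m → Prop
  | quad _ a b => a ≠ b
  | _ => True

def isCst : BF m → Bool
  | cst _ => true
  | _ => false

def isQuad : BF m → Bool
  | quad .. => true
  | _ => false

end BF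

lemma exists_bf (φ : (Fin m → Bool) → Bool)
    (hmono : ∀ s r : Fin m → Bool, (∀ i, s i ≤ r i) → φ s ≤ φ r)
    (hcard : {i | DependsOnVar φ i}.ncard ≤ 2) :
    ∃ F : BF m, (∀ u, φ u = F.eval u) ∧ (∀ i, i ∈ F.ins ↔ DependsOnVar φ i) ∧ F.okay := by
  have hfin : {i | DependsOnVar φ i}.Finite := Set.toFinite _
  have h012 : {i | DependsOnVar φ i}.ncard = 0 ∨ {i | DependsOnVar φ i}.ncard = 1 ∨
      {i | DependsOnVar φ i}.ncard = 2 := by omega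
  rcases h012 with h0 | h1 | h2
  · -- constant
    have hempty : {i | DependsOnVar φ i} = ∅ := (Set.ncard_eq_zero hfin).mp h0
    refine ⟨BF.cst (φ (fun _ => false)), fun u => ?_, fun i => ?_, trivial⟩
    · exact agree_on_deps φ u (fun _ => false)
        (fun i hi => absurd (Set.mem_setOf.mpr hi) (hempty ▸ Set.notMem_empty i))
    · simp only [BF.ins, Finset.notMem_empty, false_iff]
      exact fun hi => absurd (Set.mem_setOf.mpr hi) (hempty ▸ Set.notMem_empty i)
  · -- monic
    obtain ⟨a, ha⟩ := Set.ncard_eq_one.mp h1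
    have hdep : ∀ i, DependsOnVar φ i ↔ i = a := by
      intro i
      constructor
      · intro hi
        have : i ∈ {i | DependsOnVar φ i} := hi
        rw [ha] at this; exact this
      · intro hia
        have ha2 : a ∈ {i | DependsOnVar φ i} := by rw [ha]; exact rfl
        rw [hia]; exact ha2
    set F0 : Bool → Bool := fun x => φ (fun i => if i = a then x else false) with hF0
    have heq : ∀ u, φ u = F0 (u a) := by
      intro u
      refine agree_on_deps φ u _ (fun i hi => ?_)
      rw [(hdep i).mp hi]; simp
    have hmono0 : F0 false ≤ F0 true := by
      refine hmono _ _ (fun i => ?_)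
      by_cases hia : i = a <;> simp [hia]
    have hne0 : F0 false ≠ F0 true := by
      obtain ⟨s, r, hag, hne⟩ := (hdep a).mpr rfl
      have hsa : s a ≠ r a := by
        intro hcon
        exact hne (agree_on_deps φ s r (fun i _ => by
          by_cases hia : i = a
          · rw [hia]; exact hcon
          · exact hag i hia))
      rw [heq s, heq r] at hne
      cases hs : s a <;> cases hr : r a <;> simp [hs, hr] at hsa hne ⊢
      · exact hne
      · exact fun h => hne h.symm
    have hid : ∀ x, F0 x = x := bool1_classify F0 hmono0 hne0
    refine ⟨BF.mon a, fun u => by rw [heq u, hid (u a)]; rfl, fun i => ?_, trivial⟩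
    simp only [BF.ins, Finset.mem_singleton]
    exact ⟨fun h => (hdep i).mpr h, fun h => (hdep i).mp h⟩
  · -- strictly quadratic
    obtain ⟨a, b, hab, hD⟩ := Set.ncard_eq_two.mp h2
    have hdep : ∀ i, DependsOnVar φ i ↔ (i = a ∨ i = b) := by
      intro i
      constructor
      · intro hi
        have : i ∈ {i | DependsOnVar φ i} := hi
        rw [hD] at this
        simpa using this
      · intro hiab
        have : i ∈ ({a, b} : Set (Fin m)) := by simpa using hiab
        rw [← hD] at this; exact this
    set F2 : Bool → Bool → Bool :=
      fun x y => φ (fun i => if i = a then x else if i = b then y else false) with hF2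
    have heq : ∀ u, φ u = F2 (u a) (u b) := by
      intro u
      refine agree_on_deps φ u _ (fun i hi => ?_)
      rcases (hdep i).mp hi with h | h
      · rw [h]; simp
      · rw [h]; simp [if_neg (show b ≠ a from fun hba => hab hba.symm)]
    have hm : ∀ x x' y y' : Bool, x ≤ x' → y ≤ y' → F2 x y ≤ F2 x' y' := by
      intro x x' y y' hx hy
      refine hmono _ _ (fun i => ?_)
      by_cases hia : i = a
      · simp [hia, hx]
      · by_cases hib : i = b <;>
          simp [hia, hib, hy, if_neg (show b ≠ a from fun hba => hab hba.symm)]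
    have hda : ∃ y, F2 false y ≠ F2 true y := by
      obtain ⟨s, r, hag, hne⟩ := (hdep a).mpr (Or.inl rfl)
      have hsb : s b = r b := hag b (fun h => hab h.symm)
      have hsa : s a ≠ r a := by
        intro hcon
        refine hne (agree_on_deps φ s r (fun i hi => ?_))
        rcases (hdep i).mp hi with h | h
        · rw [h]; exact hcon
        · rw [h]; exact hsb
      rw [heq s, heq r, hsb] at hne
      cases hs : s a <;> cases hr : r a <;> rw [hs, hr] at hne hsa
      · exact absurd rfl hsa
      · exact ⟨r b, hne⟩
      · exact ⟨r b, fun h => hne h.symm⟩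
      · exact absurd rfl hsa
    have hdb : ∃ x, F2 x false ≠ F2 x true := by
      obtain ⟨s, r, hag, hne⟩ := (hdep b).mpr (Or.inr rfl)
      have hsa : s a = r a := hag a (fun h => hab h)
      have hsb : s b ≠ r b := by
        intro hcon
        refine hne (agree_on_deps φ s r (fun i hi => ?_))
        rcases (hdep i).mp hi with h | h
        · rw [h]; exact hsa
        · rw [h]; exact hcon
      rw [heq s, heq r, hsa] at hne
      cases hs : s b <;> cases hr : r b <;> rw [hs, hr] at hne hsb
      · exact absurd rfl hsb
      · exact ⟨r a, hne⟩
      · exact ⟨r a, fun h => hne h.symm⟩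
      · exact absurd rfl hsb
    have hcls := bool2_classify F2 (hm _ _ _ _ (le_refl _) (Bool.false_le _))
      (hm _ _ _ _ (Bool.false_le _) (le_refl _)) (hm _ _ _ _ (Bool.false_le _) (le_refl _))
      (hm _ _ _ _ (le_refl _) (Bool.false_le _)) hda hdb
    have hins : ∀ i, i ∈ (BF.quad true a b).ins ↔ DependsOnVar φ i := by
      intro i
      simp only [BF.ins, Finset.mem_insert, Finset.mem_singleton]
      exact (hdep i).symm
    have hins' : ∀ i, i ∈ (BF.quad false a b).ins ↔ DependsOnVar φ i := hins
    rcases hcls with hand | hor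
    · exact ⟨BF.quad true a b, fun u => by rw [heq u, hand (u a) (u b)]; rfl, hins, hab⟩
    · exact ⟨BF.quad false a b, fun u => by rw [heq u, hor (u a) (u b)]; rfl, hins', hab⟩


open scoped Classical in
noncomputable def users (form : Fin m → BF m) (i : Fin m) : Finset (Fin m) :=
  Finset.univ.filter fun k => i ∈ (form k).ins

def Slot (form : Fin m → BF m) : Type := Σ k : Fin m, Fin ((form k).needN)

noncomputable instance (form : Fin m → BF m) : Fintype (Slot form) := by
  unfold Slot; infer_instance

noncomputable instance (form : Fin m → BF m) : DecidableEq (Slot form) :=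
  Classical.decEq _

lemma ins_card_le (F : BF m) : F.ins.card ≤ 2 := by
  cases F with
  | quad op a b => exact le_trans (Finset.card_insert_le _ _) (by simp)
  | mon a => simp [BF.ins]
  | cst b => simp [BF.ins]

lemma needN_eq (F : BF m) (h : F.okay) : F.needN = 2 - F.ins.card := by
  cases F with
  | quad op a b => simp [BF.needN, BF.ins, Finset.card_pair h]
  | mon a => simp [BF.needN, BF.ins]
  | cst b => simp [BF.needN, BF.ins]

def sigmaFstFiber {α : Type*} {β : α → Type*} (a : α) :
    {q : Σ x, β x // q.1 = a} ≃ β a where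
  toFun q := q.2 ▸ q.1.2
  invFun b := ⟨⟨a, b⟩, rfl⟩
  left_inv := by rintro ⟨⟨x, b⟩, rfl⟩; rfl
  right_inv b := rfl

open scoped Classical in
lemma exists_fill (form : Fin m → BF m) (hok : ∀ k, (form k).okay)
    (husers : ∀ i, (users form i).card ≤ 2)
    (hsum : ∑ k, (form k).ins.card = ∑ i, (users form i).card) :
    ∃ fill : Slot form → Fin m,
      ∀ i, (Finset.univ.filter fun p : Slot form => fill p = i).card
            = 2 - (users form i).card := by
  have hcard : Fintype.card (Slot form)
      = Fintype.card (Σ i : Fin m, Fin (2 - (users form i).card)) := by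
    have h1 : Fintype.card (Slot form) = ∑ k, (form k).needN := by
      unfold Slot
      rw [Fintype.card_sigma]
      simp
    rw [h1, Fintype.card_sigma]
    simp only [Fintype.card_fin]
    have e1 : ∑ k, (form k).needN = ∑ k, (2 - (form k).ins.card) :=
      Finset.sum_congr rfl (fun k _ => needN_eq _ (hok k))
    rw [e1]
    have e2 : ∑ k, (2 - (form k).ins.card) + ∑ k, (form k).ins.card
        = 2 * m := by
      rw [← Finset.sum_add_distrib]
      have : ∀ k : Fin m, (2 - (form k).ins.card) + (form k).ins.card = 2 :=
        fun k => Nat.sub_add_cancel (ins_card_le _)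
      simp [this]; ring
    have e3 : ∑ i, (2 - (users form i).card) + ∑ i, (users form i).card
        = 2 * m := by
      rw [← Finset.sum_add_distrib]
      have : ∀ i : Fin m, (2 - (users form i).card) + (users form i).card = 2 :=
        fun i => Nat.sub_add_cancel (husers i)
      simp [this]; ring
    omega
  obtain ⟨Φ⟩ := Fintype.card_eq.mp hcard
  refine ⟨fun p => (Φ p).1, fun i => ?_⟩
  rw [← Fintype.card_subtype]
  have e4 : {p : Slot form // (Φ p).1 = i}
      ≃ {q : Σ j : Fin m, Fin (2 - (users form j).card) // q.1 = i} :=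
    Equiv.subtypeEquiv Φ (fun p => Iff.rfl)
  rw [Fintype.card_congr (e4.trans (sigmaFstFiber i))]
  simp


open scoped Classical in
lemma sum_ins_eq_sum_users (form : Fin m → BF m) :
    ∑ k, (form k).ins.card = ∑ i, (users form i).card := by
  have h1 : ∀ k : Fin m, (form k).ins.card = ∑ i : Fin m, ite (i ∈ (form k).ins) 1 0 := by
    intro k
    rw [← Finset.card_filter]
    congr 1
    rw [Finset.filter_mem_eq_inter, Finset.univ_inter]
  have h2 : ∀ i : Fin m, (users form i).card = ∑ k : Fin m, ite (i ∈ (form k).ins) 1 0 := by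
    intro i
    rw [users, Finset.card_filter]
  simp only [h1, h2]
  exact Finset.sum_comm


def nxtIdx (c i : ℕ) : ℕ := if i + 1 = c then 0 else i + 1
def prvIdx (c i : ℕ) : ℕ := if i = 0 then c - 1 else i - 1

lemma nxtIdx_lt {c i : ℕ} (h : i < c) : nxtIdx c i < c := by
  unfold nxtIdx; split <;> omega
lemma prvIdx_lt {c i : ℕ} (h : i < c) : prvIdx c i < c := by
  unfold prvIdx; split <;> omega
lemma nxtIdx_prvIdx {c i : ℕ} (h : i < c) : nxtIdx c (prvIdx c i) = i := by
  unfold nxtIdx prvIdx; split <;> split <;> omega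
lemma prvIdx_nxtIdx {c i : ℕ} (h : i < c) : prvIdx c (nxtIdx c i) = i := by
  unfold nxtIdx prvIdx; split <;> split <;> omega
lemma nxtIdx_ne {c i : ℕ} (h : i < c) (hc : 2 ≤ c) : nxtIdx c i ≠ i := by
  unfold nxtIdx; split <;> omega

section Geom

variable (form : Fin m → BF m) {n : ℕ}

def embF (hn : 2*m + 2 ≤ n) (a : Fin m) : Fin n := ⟨a, by have := a.2; omega⟩
def helF (hn : 2*m + 2 ≤ n) (a : Fin m) : Fin n := ⟨m + a, by have := a.2; omega⟩

@[simp] lemma embF_val (hn : 2*m + 2 ≤ n) (a : Fin m) : ((embF hn a : Fin n) : ℕ) = a := rfl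
@[simp] lemma helF_val (hn : 2*m + 2 ≤ n) (a : Fin m) : ((helF hn a : Fin n) : ℕ) = m + a := rfl

lemma embF_inj (hn : 2*m + 2 ≤ n) {a b : Fin m} (h : embF hn a = embF hn b) : a = b := by
  have := congrArg (fun x : Fin n => (x : ℕ)) h
  simp at this
  exact Fin.ext this
lemma helF_inj (hn : 2*m + 2 ≤ n) {a b : Fin m} (h : helF hn a = helF hn b) : a = b := by
  have := congrArg (fun x : Fin n => (x : ℕ)) h
  simp at this
  exact Fin.ext this
lemma embF_ne_helF (hn : 2*m + 2 ≤ n) (a b : Fin m) : embF hn a ≠ helF hn b := by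
  intro h
  have := congrArg (fun x : Fin n => (x : ℕ)) h
  have ha := a.2; have hb := b.2
  simp at this
  omega

open scoped Classical in
noncomputable def ZZ (hn : 2*m + 2 ≤ n) : Finset (Fin n) :=
  Finset.univ.filter fun z => 2*m ≤ (z : ℕ) ∨
    ∃ h : m ≤ (z : ℕ) ∧ (z : ℕ) < 2*m, ((form ⟨(z : ℕ) - m, by omega⟩).isQuad = true)

lemma mem_ZZ_pad (hn : 2*m + 2 ≤ n) {z : Fin n} (h : 2*m ≤ (z : ℕ)) :
    z ∈ ZZ form hn := by
  rw [ZZ, Finset.mem_filter]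
  exact ⟨Finset.mem_univ _, Or.inl h⟩

lemma mem_ZZ_ge (hn : 2*m + 2 ≤ n) {z : Fin n} (h : z ∈ ZZ form hn) : m ≤ (z : ℕ) := by
  rw [ZZ, Finset.mem_filter] at h
  rcases h.2 with h | ⟨⟨h1, _⟩, _⟩ <;> omega

lemma mem_ZZ_helF (hn : 2*m + 2 ≤ n) (a : Fin m) :
    helF hn a ∈ ZZ form hn ↔ (form a).isQuad = true := by
  rw [ZZ, Finset.mem_filter]
  have ha := a.2
  constructor
  · rintro ⟨-, h | ⟨⟨h1, h2⟩, h3⟩⟩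
    · simp at h; omega
    · convert h3 using 3
      apply Fin.ext
      simp
    -- note: ⟨m + a - m⟩ = a
  · intro hq
    refine ⟨Finset.mem_univ _, Or.inr ⟨⟨by simp only [helF_val]; omega,
      by simp only [helF_val]; omega⟩, ?_⟩⟩
    convert hq using 3
    apply Fin.ext
    simp

lemma embF_not_mem_ZZ (hn : 2*m + 2 ≤ n) (a : Fin m) : embF hn a ∉ ZZ form hn := by
  intro h
  have h1 := mem_ZZ_ge form hn h
  simp only [embF_val] at h1
  have := a.2
  omega

lemma ZZ_card (hn : 2*m + 2 ≤ n) : 2 ≤ (ZZ form hn).card := by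
  refine Finset.one_lt_card.mpr ⟨⟨2*m, by omega⟩, mem_ZZ_pad form hn (by simp),
          ⟨2*m+1, by omega⟩, mem_ZZ_pad form hn (by simp), ?_⟩
  intro h
  have := congrArg (fun x : Fin n => (x : ℕ)) h
  simp at this

noncomputable def cyc (hn : 2*m + 2 ≤ n) :
    Fin (ZZ form hn).card ≃o {x // x ∈ ZZ form hn} :=
  (ZZ form hn).orderIsoOfFin rfl

noncomputable def nxt (hn : 2*m + 2 ≤ n) (z : Fin n) : Fin n :=
  if h : z ∈ ZZ form hn then
    ((cyc form hn) ⟨nxtIdx _ ((cyc form hn).symm ⟨z, h⟩), nxtIdx_lt (Fin.is_lt _)⟩ : {x // x ∈ ZZ form hn})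
  else z

noncomputable def prv (hn : 2*m + 2 ≤ n) (z : Fin n) : Fin n :=
  if h : z ∈ ZZ form hn then
    ((cyc form hn) ⟨prvIdx _ ((cyc form hn).symm ⟨z, h⟩), prvIdx_lt (Fin.is_lt _)⟩ : {x // x ∈ ZZ form hn})
  else z

lemma nxt_mem (hn : 2*m + 2 ≤ n) {z : Fin n} (h : z ∈ ZZ form hn) :
    nxt form hn z ∈ ZZ form hn := by
  rw [nxt, dif_pos h]
  exact Subtype.mem _

lemma prv_mem (hn : 2*m + 2 ≤ n) {z : Fin n} (h : z ∈ ZZ form hn) :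
    prv form hn z ∈ ZZ form hn := by
  rw [prv, dif_pos h]
  exact Subtype.mem _

lemma nxt_ne (hn : 2*m + 2 ≤ n) {z : Fin n} (h : z ∈ ZZ form hn) :
    nxt form hn z ≠ z := by
  rw [nxt, dif_pos h]
  intro hco
  have h2 : ((cyc form hn) ⟨nxtIdx _ ((cyc form hn).symm ⟨z, h⟩), nxtIdx_lt (Fin.is_lt _)⟩)
      = (cyc form hn) ((cyc form hn).symm ⟨z, h⟩) := by
    rw [OrderIso.apply_symm_apply]
    exact Subtype.ext hco
  have h3 := (cyc form hn).injective h2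
  have h4 := congrArg Fin.val h3
  simp only at h4
  exact nxtIdx_ne (Fin.is_lt _) (ZZ_card form hn) h4

lemma nxt_coe (hn : 2*m + 2 ≤ n) (w : {x // x ∈ ZZ form hn}) :
    nxt form hn (w : Fin n)
      = ((cyc form hn) ⟨nxtIdx _ ((cyc form hn).symm w), nxtIdx_lt (Fin.is_lt _)⟩ : {x // x ∈ ZZ form hn}) := by
  rw [nxt, dif_pos w.2]

lemma prv_coe (hn : 2*m + 2 ≤ n) (w : {x // x ∈ ZZ form hn}) :
    prv form hn (w : Fin n)
      = ((cyc form hn) ⟨prvIdx _ ((cyc form hn).symm w), prvIdx_lt (Fin.is_lt _)⟩ : {x // x ∈ ZZ form hn}) := by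
  rw [prv, dif_pos w.2]

lemma nxt_prv (hn : 2*m + 2 ≤ n) {z : Fin n} (h : z ∈ ZZ form hn) :
    nxt form hn (prv form hn z) = z := by
  rw [prv, dif_pos h, nxt_coe form hn, OrderIso.symm_apply_apply]
  have h2 : ∀ (j : Fin (ZZ form hn).card),
      (j : ℕ) = (((cyc form hn).symm ⟨z, h⟩ : Fin (ZZ form hn).card) : ℕ) →
      (((cyc form hn) j : {x // x ∈ ZZ form hn}) : Fin n) = z := by
    intro j hj
    have hje : j = (cyc form hn).symm ⟨z, h⟩ := Fin.ext hj
    rw [hje, OrderIso.apply_symm_apply]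
  exact h2 _ (nxtIdx_prvIdx (Fin.is_lt _))

lemma prv_nxt (hn : 2*m + 2 ≤ n) {z : Fin n} (h : z ∈ ZZ form hn) :
    prv form hn (nxt form hn z) = z := by
  rw [nxt, dif_pos h, prv_coe form hn, OrderIso.symm_apply_apply]
  have h2 : ∀ (j : Fin (ZZ form hn).card),
      (j : ℕ) = (((cyc form hn).symm ⟨z, h⟩ : Fin (ZZ form hn).card) : ℕ) →
      (((cyc form hn) j : {x // x ∈ ZZ form hn}) : Fin n) = z := by
    intro j hj
    have hje : j = (cyc form hn).symm ⟨z, h⟩ := Fin.ext hj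
    rw [hje, OrderIso.apply_symm_apply]
  exact h2 _ (prvIdx_nxtIdx (Fin.is_lt _))

lemma nxt_eq_iff (hn : 2*m + 2 ≤ n) {w z : Fin n} (hw : w ∈ ZZ form hn)
    (hz : z ∈ ZZ form hn) : nxt form hn w = z ↔ w = prv form hn z := by
  constructor
  · intro h
    rw [← h, prv_nxt form hn hw]
  · intro h
    rw [h, nxt_prv form hn hz]

end Geom


section Constr

variable (form : Fin m → BF m) (fill : Slot form → Fin m) {n : ℕ} (hn : 2*m + 2 ≤ n)

noncomputable def fillAt (k : Fin m) (j : ℕ) : Fin m :=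
  if hj : j < (form k).needN then fill ⟨k, ⟨j, hj⟩⟩ else k

noncomputable def mainPair (k : Fin m) : Fin n × Fin n × Bool :=
  match form k with
  | .quad op a b => (embF hn a, embF hn b, op)
  | .mon a => (embF hn a, helF hn k, true)
  | .cst true => (helF hn k, embF hn (fillAt form fill k 0), false)
  | .cst false => (helF hn k, embF hn (fillAt form fill k 0), true)

noncomputable def helPair (k : Fin m) : Fin n × Fin n × Bool :=
  match form k with
  | .quad _ _ _ => (helF hn k, nxt form hn (helF hn k), false)
  | .mon _ => (helF hn k, embF hn (fillAt form fill k 0), false)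
  | .cst true => (helF hn k, embF hn (fillAt form fill k 1), false)
  | .cst false => (helF hn k, embF hn (fillAt form fill k 1), true)

noncomputable def inputPair (k : Fin n) : Fin n × Fin n × Bool :=
  if h : (k : ℕ) < m then mainPair form fill hn ⟨k, h⟩
  else if h2 : (k : ℕ) < 2*m then helPair form fill hn ⟨(k : ℕ) - m, by omega⟩
  else (k, nxt form hn k, false)

noncomputable def gSys : (Fin n → Bool) → (Fin n → Bool) := fun s k =>
  if (inputPair form fill hn k).2.2 then
    s (inputPair form fill hn k).1 && s (inputPair form fill hn k).2.1
  else
    s (inputPair form fill hn k).1 || s (inputPair form fill hn k).2.1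

lemma inputPair_emb (k : Fin m) :
    inputPair form fill hn (embF hn k) = mainPair form fill hn k := by
  rw [inputPair, dif_pos (show ((embF hn k : Fin n) : ℕ) < m from k.2)]
  exact congrArg _ (Fin.ext rfl)

lemma inputPair_hel (k : Fin m) :
    inputPair form fill hn (helF hn k) = helPair form fill hn k := by
  have hk := k.2
  have h1 : ¬ ((helF hn k : Fin n) : ℕ) < m := by simp only [helF_val]; omega
  have h2 : ((helF hn k : Fin n) : ℕ) < 2*m := by simp only [helF_val]; omega
  rw [inputPair, dif_neg h1, dif_pos h2]
  congr 1
  apply Fin.ext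
  simp only [helF_val]
  omega

lemma inputPair_pad (z : Fin n) (h : 2*m ≤ (z : ℕ)) :
    inputPair form fill hn z = (z, nxt form hn z, false) := by
  rw [inputPair, dif_neg (by omega), dif_neg (by omega)]

def hval : BF m → Bool
  | .cst b => b
  | _ => true

noncomputable def extS (u : Fin m → Bool) : Fin n → Bool := fun x =>
  if h : (x : ℕ) < m then u ⟨x, h⟩
  else if h2 : (x : ℕ) < 2*m then hval (form ⟨(x : ℕ) - m, by omega⟩)
  else true

lemma extS_emb (u : Fin m → Bool) (k : Fin m) :
    extS form (n := n) u (embF hn k) = u k := by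
  rw [extS, dif_pos (show ((embF hn k : Fin n) : ℕ) < m from k.2)]
  exact congrArg _ (Fin.ext rfl)

lemma extS_hel (u : Fin m → Bool) (k : Fin m) :
    extS form (n := n) u (helF hn k) = hval (form k) := by
  have hk := k.2
  have h1 : ¬ ((helF hn k : Fin n) : ℕ) < m := by simp only [helF_val]; omega
  have h2 : ((helF hn k : Fin n) : ℕ) < 2*m := by simp only [helF_val]; omega
  rw [extS, dif_neg h1, dif_pos h2]
  congr 2
  apply Fin.ext
  simp only [helF_val]
  omega

lemma extS_pad (u : Fin m → Bool) (z : Fin n) (h : 2*m ≤ (z : ℕ)) :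
    extS form u z = true := by
  rw [extS, dif_neg (by omega), dif_neg (by omega)]

lemma hval_of_quad {F : BF m} (h : F.isQuad = true) : hval F = true := by
  cases F <;> simp [BF.isQuad] at h ⊢ <;> rfl

lemma extS_ZZ (u : Fin m → Bool) {z : Fin n} (h : z ∈ ZZ form hn) :
    extS form u z = true := by
  rw [ZZ, Finset.mem_filter] at h
  rcases h.2 with hp | ⟨⟨h1, h2⟩, hq⟩
  · exact extS_pad form u z hp
  · rw [extS, dif_neg (by omega), dif_pos (by omega)]
    exact hval_of_quad hq

lemma fin_region (x : Fin n) :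
    (∃ k : Fin m, x = embF hn k) ∨ (∃ k : Fin m, x = helF hn k) ∨ 2*m ≤ (x : ℕ) := by
  by_cases h : (x : ℕ) < m
  · exact Or.inl ⟨⟨x, h⟩, Fin.ext rfl⟩
  by_cases h2 : (x : ℕ) < 2*m
  · refine Or.inr (Or.inl ⟨⟨(x : ℕ) - m, by omega⟩, Fin.ext ?_⟩)
    simp only [helF_val]
    omega
  · exact Or.inr (Or.inr (by omega))

lemma gSys_step (u : Fin m → Bool) :
    gSys form fill hn (extS form u) = extS form (fun k => (form k).eval u) := by
  funext x
  rcases fin_region (hn := hn) x with ⟨k, rfl⟩ | ⟨k, rfl⟩ | hp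
  · simp only [gSys, inputPair_emb, extS_emb]
    cases hF : form k with
    | quad op a b =>
        cases op <;>
          simp [mainPair, hF, extS_emb, BF.eval]
    | mon a =>
        simp [mainPair, hF, extS_emb, extS_hel, hval, BF.eval]
    | cst b =>
        cases b <;>
          simp [mainPair, hF, extS_hel, hval, BF.eval]
  · simp only [gSys, inputPair_hel, extS_hel]
    cases hF : form k with
    | quad op a b =>
        simp [helPair, hF, extS_hel, hval]
    | mon a =>
        simp [helPair, hF, extS_hel, hval]
    | cst b =>
        cases b <;>
          simp [helPair, hF, extS_hel, hval]
  · simp only [gSys, inputPair_pad form fill hn x hp]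
    simp [extS_pad form _ x hp]

lemma band_mono {a a' b b' : Bool} (ha : a ≤ a') (hb : b ≤ b') :
    (a && b) ≤ (a' && b') := by
  revert ha hb; cases a <;> cases a' <;> cases b <;> cases b' <;> decide

lemma bor_mono {a a' b b' : Bool} (ha : a ≤ a') (hb : b ≤ b') :
    (a || b) ≤ (a' || b') := by
  revert ha hb; cases a <;> cases a' <;> cases b <;> cases b' <;> decide

lemma gSys_cooperative : Cooperative (gSys form fill hn) := by
  intro s r hle k
  have h1 := hle (inputPair form fill hn k).1
  have h2 := hle (inputPair form fill hn k).2.1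
  simp only [gSys]
  cases (inputPair form fill hn k).2.2 <;> simp only [if_true, if_false, Bool.false_eq_true, ite_true, ite_false]
  · exact bor_mono h1 h2
  · exact band_mono h1 h2

lemma pair_ne (hok : ∀ k, (form k).okay) (k : Fin n) :
    (inputPair form fill hn k).1 ≠ (inputPair form fill hn k).2.1 := by
  rcases fin_region (hn := hn) k with ⟨k', rfl⟩ | ⟨k', rfl⟩ | hp
  · rw [inputPair_emb]
    cases hF : form k' with
    | quad op a b =>
        have hab : a ≠ b := by have := hok k'; rw [hF] at this; exact this
        simp only [mainPair, hF]
        exact fun h => hab (embF_inj hn h)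
    | mon a =>
        simp only [mainPair, hF]
        exact embF_ne_helF hn a k'
    | cst b =>
        cases b <;> simp only [mainPair, hF] <;>
          exact fun h => embF_ne_helF hn _ k' h.symm
  · rw [inputPair_hel]
    cases hF : form k' with
    | quad op a b =>
        have hmem : helF hn k' ∈ ZZ form hn :=
          (mem_ZZ_helF form hn k').mpr (by rw [hF]; rfl)
        simp only [helPair, hF]
        exact fun h => nxt_ne form hn hmem h.symm
    | mon a =>
        simp only [helPair, hF]
        exact fun h => embF_ne_helF hn _ k' h.symm
    | cst b =>
        cases b <;> simp only [helPair, hF] <;>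
          exact fun h => embF_ne_helF hn _ k' h.symm
  · rw [inputPair_pad form fill hn k hp]
    exact fun h => nxt_ne form hn (mem_ZZ_pad form hn hp) h.symm

lemma gSys_quadratic (hok : ∀ k, (form k).okay) :
    ∀ k, ∃ i j : Fin n, i ≠ j ∧
      ((∀ s, gSys form fill hn s k = (s i && s j)) ∨
       (∀ s, gSys form fill hn s k = (s i || s j))) := by
  intro k
  refine ⟨(inputPair form fill hn k).1, (inputPair form fill hn k).2.1,
    pair_ne form fill hn hok k, ?_⟩
  cases hop : (inputPair form fill hn k).2.2
  · right; intro s; simp only [gSys, hop]; simp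
  · left; intro s; simp only [gSys, hop]; simp

lemma dependsOn_gSys {k x : Fin n}
    (h : DependsOnVar (fun s => gSys form fill hn s k) x) :
    x = (inputPair form fill hn k).1 ∨ x = (inputPair form fill hn k).2.1 := by
  by_contra hcon
  push_neg at hcon
  obtain ⟨s, r, hag, hne⟩ := h
  apply hne
  have e1 : s (inputPair form fill hn k).1 = r (inputPair form fill hn k).1 :=
    hag _ (fun h => hcon.1 h.symm)
  have e2 : s (inputPair form fill hn k).2.1 = r (inputPair form fill hn k).2.1 :=
    hag _ (fun h => hcon.2 h.symm)
  simp only [gSys, e1, e2]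

lemma gSys_indeg : IndegLE (gSys form fill hn) 2 := by
  intro k
  have hsub : {i | DependsOnVar (fun x => gSys form fill hn x k) i} ⊆
      {(inputPair form fill hn k).1, (inputPair form fill hn k).2.1} := by
    intro x hx
    rcases dependsOn_gSys form fill hn hx with h | h
    · exact Or.inl h
    · exact Or.inr h
  refine le_trans (Set.ncard_le_ncard hsub (Set.toFinite _)) ?_
  refine le_trans (Set.ncard_insert_le _ _) ?_
  simp


noncomputable def ownerS (p : Slot form) : Fin n :=
  if (form p.1).isCst = true ∧ (p.2 : ℕ) = 0 then embF hn p.1 else helF hn p.1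

lemma fillAt_eq (k : Fin m) (j : ℕ) (hj : j < (form k).needN) :
    fillAt form fill k j = fill ⟨k, ⟨j, hj⟩⟩ := dif_pos hj

lemma embF_ne_ZZmem {z : Fin n} (hz : z ∈ ZZ form hn) (a : Fin m) : embF hn a ≠ z :=
  fun h => embF_not_mem_ZZ form hn a (h ▸ hz)

lemma x_ne_embF {x : Fin n} (hn : 2*m + 2 ≤ n) (hx : ¬ (x : ℕ) < m) (a : Fin m) :
    x ≠ embF hn a := by
  intro h
  have hv := congrArg (fun y : Fin n => (y : ℕ)) h
  have := a.2
  simp only [embF_val] at hv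
  omega

lemma x_ne_helF {x : Fin n} (hn : 2*m + 2 ≤ n) (hx : ¬ (x : ℕ) < 2*m) (a : Fin m) :
    x ≠ helF hn a := by
  intro h
  have hv := congrArg (fun y : Fin n => (y : ℕ)) h
  have := a.2
  simp only [helF_val] at hv
  omega

open scoped Classical in
lemma gSys_outdeg (husers : ∀ i, (users form i).card ≤ 2)
    (hfill : ∀ i, (Finset.univ.filter fun p : Slot form => fill p = i).card
      = 2 - (users form i).card) :
    OutdegLE (gSys form fill hn) 2 := by
  intro x
  set Tset := Finset.univ.filter
    (fun k : Fin n => x = (inputPair form fill hn k).1 ∨ x = (inputPair form fill hn k).2.1)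
    with hTdef
  have hsub : {k | DependsOnVar (fun s => gSys form fill hn s k) x} ⊆ (Tset : Set (Fin n)) := by
    intro k hk
    simp only [hTdef, Finset.coe_filter, Set.mem_setOf_eq, Finset.mem_univ, true_and]
    exact dependsOn_gSys form fill hn hk
  refine le_trans (le_trans (Set.ncard_le_ncard hsub (Set.toFinite _))
    (le_of_eq (Set.ncard_coe_finset _))) ?_
  have memT : ∀ k : Fin n, k ∈ Tset →
      x = (inputPair form fill hn k).1 ∨ x = (inputPair form fill hn k).2.1 := by
    intro k hk
    simpa [hTdef] using hk
  rcases fin_region (hn := hn) x with ⟨i, rfl⟩ | ⟨j, rfl⟩ | hp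
  · -- x is a main coordinate
    have hsub2 : Tset ⊆ ((users form i).image (embF hn)) ∪
        ((Finset.univ.filter fun p : Slot form => fill p = i).image (ownerS form hn)) := by
      intro k hk
      have hk' := memT k hk
      rcases fin_region (hn := hn) k with ⟨k', rfl⟩ | ⟨k', rfl⟩ | hkp
      · rw [inputPair_emb] at hk'
        cases hF : form k' with
        | quad op a b =>
            simp only [mainPair, hF] at hk'
            have hiab : i = a ∨ i = b := by
              rcases hk' with h | h
              · exact Or.inl (embF_inj hn h)
              · exact Or.inr (embF_inj hn h)
            refine Finset.mem_union_left _ (Finset.mem_image.mpr ⟨k', ?_, rfl⟩)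
            rw [users, Finset.mem_filter]
            refine ⟨Finset.mem_univ _, ?_⟩
            rw [hF]
            simp only [BF.ins, Finset.mem_insert, Finset.mem_singleton]
            exact hiab
        | mon a =>
            simp only [mainPair, hF] at hk'
            rcases hk' with h | h
            · refine Finset.mem_union_left _ (Finset.mem_image.mpr ⟨k', ?_, rfl⟩)
              rw [users, Finset.mem_filter]
              refine ⟨Finset.mem_univ _, ?_⟩
              rw [hF, embF_inj hn h]
              simp [BF.ins]
            · exact absurd h (embF_ne_helF hn i k')
        | cst b =>
            have hfl : fillAt form fill k' 0 = fill ⟨k', ⟨0, by rw [hF]; norm_num [BF.needN]⟩⟩ :=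
              fillAt_eq form fill k' 0 (by rw [hF]; norm_num [BF.needN])
            have hii : fill ⟨k', ⟨0, by rw [hF]; norm_num [BF.needN]⟩⟩ = i := by
              cases b <;> simp only [mainPair, hF] at hk' <;>
                rcases hk' with h | h <;>
                  first
                    | exact absurd h (embF_ne_helF hn i k')
                    | (rw [hfl] at h; exact (embF_inj hn h).symm)
            refine Finset.mem_union_right _ (Finset.mem_image.mpr
              ⟨⟨k', ⟨0, by rw [hF]; norm_num [BF.needN]⟩⟩, ?_, ?_⟩)
            · exact Finset.mem_filter.mpr ⟨Finset.mem_univ _, hii⟩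
            · simp [ownerS, hF, BF.isCst]
      · rw [inputPair_hel] at hk'
        cases hF : form k' with
        | quad op a b =>
            simp only [helPair, hF] at hk'
            rcases hk' with h | h
            · exact absurd h (embF_ne_helF hn i k')
            · exact absurd h (embF_ne_ZZmem form hn
                (nxt_mem form hn ((mem_ZZ_helF form hn k').mpr (by rw [hF]; rfl))) i)
        | mon a =>
            simp only [helPair, hF] at hk'
            rcases hk' with h | h
            · exact absurd h (embF_ne_helF hn i k')
            · have hfl : fillAt form fill k' 0 = fill ⟨k', ⟨0, by rw [hF]; norm_num [BF.needN]⟩⟩ :=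
                fillAt_eq form fill k' 0 (by rw [hF]; norm_num [BF.needN])
              rw [hfl] at h
              refine Finset.mem_union_right _ (Finset.mem_image.mpr
                ⟨⟨k', ⟨0, by rw [hF]; norm_num [BF.needN]⟩⟩, ?_, ?_⟩)
              · exact Finset.mem_filter.mpr ⟨Finset.mem_univ _, (embF_inj hn h).symm⟩
              · simp [ownerS, hF, BF.isCst]
        | cst b =>
            have hfl : fillAt form fill k' 1 = fill ⟨k', ⟨1, by rw [hF]; norm_num [BF.needN]⟩⟩ :=
              fillAt_eq form fill k' 1 (by rw [hF]; norm_num [BF.needN])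
            have hii : fill ⟨k', ⟨1, by rw [hF]; norm_num [BF.needN]⟩⟩ = i := by
              cases b <;> simp only [helPair, hF] at hk' <;>
                rcases hk' with h | h <;>
                  first
                    | exact absurd h (embF_ne_helF hn i k')
                    | (rw [hfl] at h; exact (embF_inj hn h).symm)
            refine Finset.mem_union_right _ (Finset.mem_image.mpr
              ⟨⟨k', ⟨1, by rw [hF]; norm_num [BF.needN]⟩⟩, ?_, ?_⟩)
            · exact Finset.mem_filter.mpr ⟨Finset.mem_univ _, hii⟩
            · simp [ownerS]
      · rw [inputPair_pad form fill hn k hkp] at hk'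
        rcases hk' with h | h
        · have := congrArg (fun y : Fin n => (y : ℕ)) h
          have hilt := i.2
          simp only [embF_val] at this
          omega
        · exact absurd h (embF_ne_ZZmem form hn (nxt_mem form hn (mem_ZZ_pad form hn hkp)) i)
    refine le_trans (Finset.card_le_card hsub2) (le_trans (Finset.card_union_le _ _) ?_)
    have hc1 : ((users form i).image (embF hn)).card ≤ (users form i).card :=
      Finset.card_image_le
    have hc2 : ((Finset.univ.filter fun p : Slot form => fill p = i).image
        (ownerS form hn)).card ≤ 2 - (users form i).card := by
      refine le_trans Finset.card_image_le (le_of_eq (hfill i))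
    have := husers i
    omega
  · -- x is a helper coordinate
    by_cases hq : (form j).isQuad = true
    · have hxZZ : helF hn j ∈ ZZ form hn := (mem_ZZ_helF form hn j).mpr hq
      have hsub2 : Tset ⊆ {helF hn j, prv form hn (helF hn j)} := by
        intro k hk
        have hk' := memT k hk
        simp only [Finset.mem_insert, Finset.mem_singleton]
        rcases fin_region (hn := hn) k with ⟨k', rfl⟩ | ⟨k', rfl⟩ | hkp
        · rw [inputPair_emb] at hk'
          exfalso
          cases hF : form k' with
          | quad op a b =>
              simp only [mainPair, hF] at hk'
              rcases hk' with h | h <;> exact embF_ne_helF hn _ j h.symm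
          | mon a =>
              simp only [mainPair, hF] at hk'
              rcases hk' with h | h
              · exact embF_ne_helF hn a j h.symm
              · have : k' = j := helF_inj hn h.symm
                rw [this] at hF
                rw [hF] at hq
                simp [BF.isQuad] at hq
          | cst b =>
              cases b <;> simp only [mainPair, hF] at hk' <;>
                rcases hk' with h | h <;>
                first
                  | (have hkj : k' = j := helF_inj hn h.symm
                     rw [hkj] at hF
                     rw [hF] at hq
                     simp [BF.isQuad] at hq)
                  | exact embF_ne_helF hn _ j h.symm
        · rw [inputPair_hel] at hk'
          cases hF : form k' with
          | quad op a b =>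
              simp only [helPair, hF] at hk'
              have hkZZ : helF hn k' ∈ ZZ form hn :=
                (mem_ZZ_helF form hn k').mpr (by rw [hF]; rfl)
              rcases hk' with h | h
              · left; exact h.symm
              · right
                have := (nxt_eq_iff form hn hkZZ hxZZ).mp h.symm
                rw [← this]
          | mon a =>
              exfalso
              simp only [helPair, hF] at hk'
              rcases hk' with h | h
              · have hkj : k' = j := helF_inj hn h.symm
                rw [hkj] at hF
                rw [hF] at hq
                simp [BF.isQuad] at hq
              · exact embF_ne_helF hn _ j h.symm
          | cst b =>
              exfalso
              cases b <;> simp only [helPair, hF] at hk' <;>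
                rcases hk' with h | h <;>
                first
                  | (have hkj : k' = j := helF_inj hn h.symm
                     rw [hkj] at hF
                     rw [hF] at hq
                     simp [BF.isQuad] at hq)
                  | exact embF_ne_helF hn _ j h.symm
        · rw [inputPair_pad form fill hn k hkp] at hk'
          rcases hk' with h | h
          · exfalso
            have := congrArg (fun y : Fin n => (y : ℕ)) h
            have hjlt := j.2
            simp only [helF_val] at this
            omega
          · right
            have hkZZ : k ∈ ZZ form hn := mem_ZZ_pad form hn hkp
            have := (nxt_eq_iff form hn hkZZ hxZZ).mp h.symm
            rw [← this]
      refine le_trans (Finset.card_le_card hsub2) ?_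
      refine le_trans (Finset.card_insert_le _ _) ?_
      simp
    · -- helper of a non-quadratic coordinate
      have hxnZZ : helF hn j ∉ ZZ form hn := fun hmem => hq ((mem_ZZ_helF form hn j).mp hmem)
      have hsub2 : Tset ⊆ {embF hn j, helF hn j} := by
        intro k hk
        have hk' := memT k hk
        simp only [Finset.mem_insert, Finset.mem_singleton]
        rcases fin_region (hn := hn) k with ⟨k', rfl⟩ | ⟨k', rfl⟩ | hkp
        · rw [inputPair_emb] at hk'
          cases hF : form k' with
          | quad op a b =>
              exfalso
              simp only [mainPair, hF] at hk'
              rcases hk' with h | h <;> exact embF_ne_helF hn _ j h.symm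
          | mon a =>
              simp only [mainPair, hF] at hk'
              rcases hk' with h | h
              · exact absurd h.symm (embF_ne_helF hn a j)
              · left
                rw [helF_inj hn h.symm]
          | cst b =>
              cases b <;> simp only [mainPair, hF] at hk' <;>
                rcases hk' with h | h <;>
                first
                  | (left; rw [helF_inj hn h.symm])
                  | exact absurd h.symm (embF_ne_helF hn _ j)
        · rw [inputPair_hel] at hk'
          cases hF : form k' with
          | quad op a b =>
              exfalso
              simp only [helPair, hF] at hk'
              have hkZZ : helF hn k' ∈ ZZ form hn :=
                (mem_ZZ_helF form hn k').mpr (by rw [hF]; rfl)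
              rcases hk' with h | h
              · have hkj : k' = j := helF_inj hn h.symm
                rw [hkj] at hF
                rw [hF] at hq
                exact hq rfl
              · exact hxnZZ (h ▸ nxt_mem form hn hkZZ)
          | mon a =>
              simp only [helPair, hF] at hk'
              rcases hk' with h | h
              · right; rw [helF_inj hn h.symm]
              · exact absurd h.symm (embF_ne_helF hn _ j)
          | cst b =>
              cases b <;> simp only [helPair, hF] at hk' <;>
                rcases hk' with h | h <;>
                first
                  | (right; rw [helF_inj hn h.symm])
                  | exact absurd h.symm (embF_ne_helF hn _ j)
        · rw [inputPair_pad form fill hn k hkp] at hk'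
          exfalso
          rcases hk' with h | h
          · have := congrArg (fun y : Fin n => (y : ℕ)) h
            have hjlt := j.2
            simp only [helF_val] at this
            omega
          · exact hxnZZ (h ▸ nxt_mem form hn (mem_ZZ_pad form hn hkp))
      refine le_trans (Finset.card_le_card hsub2) ?_
      refine le_trans (Finset.card_insert_le _ _) ?_
      simp
  · -- x is a padding coordinate
    have hxZZ : x ∈ ZZ form hn := mem_ZZ_pad form hn hp
    have hsub2 : Tset ⊆ {x, prv form hn x} := by
      intro k hk
      have hk' := memT k hk
      simp only [Finset.mem_insert, Finset.mem_singleton]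
      rcases fin_region (hn := hn) k with ⟨k', rfl⟩ | ⟨k', rfl⟩ | hkp
      · rw [inputPair_emb] at hk'
        exfalso
        cases hF : form k' with
        | quad op a b =>
            simp only [mainPair, hF] at hk'
            rcases hk' with h | h
            · exact x_ne_embF hn (by omega) a h
            · exact x_ne_embF hn (by omega) b h
        | mon a =>
            simp only [mainPair, hF] at hk'
            rcases hk' with h | h
            · exact x_ne_embF hn (by omega) a h
            · exact x_ne_helF hn (by omega) k' h
        | cst b =>
            cases b <;> simp only [mainPair, hF] at hk' <;> rcases hk' with h | h <;>
              first
                | exact x_ne_helF hn (by omega) k' h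
                | exact x_ne_embF hn (by omega) _ h
      · rw [inputPair_hel] at hk'
        cases hF : form k' with
        | quad op a b =>
            simp only [helPair, hF] at hk'
            have hkZZ : helF hn k' ∈ ZZ form hn :=
              (mem_ZZ_helF form hn k').mpr (by rw [hF]; rfl)
            rcases hk' with h | h
            · exact absurd h (x_ne_helF hn (by omega) k')
            · right
              have := (nxt_eq_iff form hn hkZZ hxZZ).mp h.symm
              rw [← this]
        | mon a =>
            exfalso
            simp only [helPair, hF] at hk'
            rcases hk' with h | h
            · exact x_ne_helF hn (by omega) k' h
            · exact x_ne_embF hn (by omega) _ h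
        | cst b =>
            exfalso
            cases b <;> simp only [helPair, hF] at hk' <;> rcases hk' with h | h <;>
              first
                | exact x_ne_helF hn (by omega) k' h
                | exact x_ne_embF hn (by omega) _ h
      · rw [inputPair_pad form fill hn k hkp] at hk'
        rcases hk' with h | h
        · left; exact h.symm
        · right
          have hkZZ : k ∈ ZZ form hn := mem_ZZ_pad form hn hkp
          have := (nxt_eq_iff form hn hkZZ hxZZ).mp h.symm
          rw [← this]
    refine le_trans (Finset.card_le_card hsub2) ?_
    refine le_trans (Finset.card_insert_le _ _) ?_
    simp

end Constr


open scoped Classical in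
lemma ncard_setOf_eq_card_filter {α : Type*} [Fintype α] (p : α → Prop) :
    {x | p x}.ncard = (Finset.univ.filter p).card := by
  rw [← Set.ncard_coe_finset]
  congr 1
  simp [Finset.coe_filter]

theorem key_construction {m n : ℕ} (hn : 2*m + 2 ≤ n)
    (f : (Fin m → Bool) → (Fin m → Bool))
    (hcoop : Cooperative f) (hin : IndegLE f 2) (hout : OutdegLE f 2)
    (s0 : Fin m → Bool) (L : ℕ) (hper : f^[L] s0 = s0)
    (hinj : Set.InjOn (fun t => f^[t] s0) (Finset.range L)) :
    ∃ g : (Fin n → Bool) → (Fin n → Bool),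
      Cooperative g ∧ IndegLE g 2 ∧ OutdegLE g 2 ∧
      (∀ k, ∃ i j : Fin n, i ≠ j ∧
        ((∀ s, g s k = (s i && s j)) ∨ (∀ s, g s k = (s i || s j)))) ∧
      ∃ y0 : Fin n → Bool, g^[L] y0 = y0 ∧
        Set.InjOn (fun t => g^[t] y0) (Finset.range L) := by
  classical
  -- classify the regulatory functions
  have hforms : ∀ k : Fin m, ∃ F : BF m, (∀ u, f u k = F.eval u) ∧
      (∀ i, i ∈ F.ins ↔ DependsOnVar (fun x => f x k) i) ∧ F.okay := by
    intro k
    exact exists_bf (fun u => f u k) (fun s r hle => hcoop s r hle k) (hin k)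
  choose form hspec hins hok using hforms
  -- outdegree data
  have husers : ∀ i, (users form i).card ≤ 2 := by
    intro i
    have he : users form i = Finset.univ.filter (fun k => DependsOnVar (fun x => f x k) i) := by
      rw [users]
      exact Finset.filter_congr (fun k _ => by rw [hins k i])
    rw [he, ← ncard_setOf_eq_card_filter]
    exact hout i
  obtain ⟨fill, hfill⟩ := exists_fill form hok husers (sum_ins_eq_sum_users form)
  refine ⟨gSys form fill hn, gSys_cooperative form fill hn, gSys_indeg form fill hn,
    gSys_outdeg form fill hn husers hfill, gSys_quadratic form fill hn hok, ?_⟩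
  -- the orbit
  have hstep : ∀ u, gSys form fill hn (extS form u) = extS form (f u) := by
    intro u
    rw [gSys_step form fill hn u]
    have he : (fun k => (form k).eval u) = f u := funext fun k => (hspec k u).symm
    rw [he]
  have hiter : ∀ (t : ℕ) (u : Fin m → Bool),
      (gSys form fill hn)^[t] (extS form u) = extS form (f^[t] u) := by
    intro t
    induction t with
    | zero => intro u; simp
    | succ t ih =>
        intro u
        rw [Function.iterate_succ_apply', Function.iterate_succ_apply', ih, hstep]
  have hextinj : ∀ u v : Fin m → Bool, extS form (n := n) u = extS form v → u = v := by
    intro u v h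
    funext k
    have := congrArg (fun w : Fin n → Bool => w (embF hn k)) h
    simpa only [extS_emb form hn] using this
  refine ⟨extS form s0, ?_, ?_⟩
  · rw [hiter L s0, hper]
  · intro t1 h1 t2 h2 he
    refine hinj h1 h2 ?_
    simp only at he ⊢
    rw [hiter t1 s0, hiter t2 s0] at he
    exact hextinj _ _ he

end Stmt16Aux


/-- If for every `c` with `c² < 2` and every sufficiently large `m` there is an
`m`-dimensional bi-quadratic cooperative system with a periodic orbit of length at least
`(c²)^m = c^(2m)`, then for every `0 < c < √2` and sufficiently large `n` there is an
`n`-dimensional bi-quadratic cooperative system, all of whose regulatory functions are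
strictly quadratic, with a periodic orbit of length at least `cⁿ`. -/
theorem stmt16
    (H : ∀ c : ℝ, 0 < c → c ^ 2 < 2 → ∀ᶠ m : ℕ in Filter.atTop,
      ∃ f : (Fin m → Bool) → (Fin m → Bool),
        Cooperative f ∧ IndegLE f 2 ∧ OutdegLE f 2 ∧ HasOrbitOfLength f ((c ^ 2) ^ m)) :
    ∀ c : ℝ, 0 < c → c < Real.sqrt 2 → ∀ᶠ n : ℕ in Filter.atTop,
      ∃ g : (Fin n → Bool) → (Fin n → Bool),
        Cooperative g ∧ IndegLE g 2 ∧ OutdegLE g 2 ∧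
        (∀ k, ∃ i j : Fin n, i ≠ j ∧
          ((∀ s, g s k = (s i && s j)) ∨ (∀ s, g s k = (s i || s j)))) ∧
        HasOrbitOfLength g (c ^ n) := by
  intro c hc hcs
  have hsq : Real.sqrt 2 ^ 2 = 2 := Real.sq_sqrt (by norm_num)
  have hsqnn : 0 ≤ Real.sqrt 2 := Real.sqrt_nonneg 2
  set c' : ℝ := max ((c + Real.sqrt 2)/2) (6/5) with hc'def
  have hc'ge : (6/5 : ℝ) ≤ c' := le_max_right _ _
  have hc'pos : 0 < c' := lt_of_lt_of_le (by norm_num) hc'ge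
  have h65 : (6/5 : ℝ) < Real.sqrt 2 := by nlinarith
  have hc'lt : c' < Real.sqrt 2 := max_lt (by linarith) h65
  have hcc' : c < c' := lt_of_lt_of_le (by linarith) (le_max_left _ _)
  have hc'2 : c' ^ 2 < 2 := by nlinarith
  obtain ⟨M0, hM0⟩ := Filter.eventually_atTop.mp (H c' hc'pos hc'2)
  set q : ℝ := max c 1 with hqdef
  have hqpos : (0:ℝ) < q := lt_of_lt_of_le one_pos (le_max_right _ _)
  have hqc' : q < c' := max_lt hcc' (lt_of_lt_of_le (by norm_num) hc'ge)
  have hrho : 1 < c' / q := (one_lt_div hqpos).mpr hqc'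
  obtain ⟨N1, hN1⟩ := Filter.eventually_atTop.mp
    ((tendsto_pow_atTop_atTop_of_one_lt hrho).eventually_ge_atTop (c' ^ 3))
  rw [Filter.eventually_atTop]
  refine ⟨max (2*M0 + 2) (N1 + 3) + 3, fun n hn => ?_⟩
  have hnN1 : N1 ≤ n := by omega
  set mm := (n - 2)/2 with hmmdef
  have hn1 : 2*mm + 2 ≤ n := by omega
  have hn2 : n ≤ 2*mm + 3 := by omega
  have hmM0 : M0 ≤ mm := by omega
  obtain ⟨f, hco, hi, ho, s0, L, hL0, hper, hinj, hlen⟩ := hM0 mm hmM0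
  obtain ⟨g, hgco, hgi, hgo, hgq, y0, hgper, hginj⟩ :=
    Stmt16Aux.key_construction hn1 f hco hi ho s0 L hper hinj
  refine ⟨g, hgco, hgi, hgo, hgq, y0, L, hL0, hgper, hginj, ?_⟩
  have hkey : c ^ n ≤ (c' ^ 2) ^ mm := by
    have h1 : c ^ n ≤ q ^ n := pow_le_pow_left₀ hc.le (le_max_left c 1) n
    have hmul : q * (c' / q) = c' := by field_simp
    have h2 : q ^ n * (c'/q) ^ n = c' ^ n := by rw [← mul_pow, hmul]
    have h3 : c' ^ 3 ≤ (c'/q) ^ n := hN1 n hnN1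
    have h4 : q ^ n * c' ^ 3 ≤ c' ^ n := by
      calc q ^ n * c' ^ 3 ≤ q ^ n * (c'/q) ^ n :=
            mul_le_mul_of_nonneg_left h3 (pow_nonneg hqpos.le n)
        _ = c' ^ n := h2
    have h5 : c' ^ n = c' ^ (n - 3) * c' ^ 3 := by
      rw [← pow_add]
      congr 1
      omega
    have hc3 : (0:ℝ) < c' ^ 3 := pow_pos hc'pos 3
    have h6 : q ^ n ≤ c' ^ (n - 3) := by
      refine le_of_mul_le_mul_right ?_ hc3
      rw [← h5]
      exact h4
    have h7 : c' ^ (n - 3) ≤ c' ^ (2*mm) :=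
      pow_le_pow_right₀ (le_trans (by norm_num) hc'ge) (by omega)
    have h8 : (c' ^ 2) ^ mm = c' ^ (2*mm) := by rw [← pow_mul]
    calc c ^ n ≤ q ^ n := h1
      _ ≤ c' ^ (n - 3) := h6
      _ ≤ c' ^ (2*mm) := h7
      _ = (c' ^ 2) ^ mm := h8.symm
  exact le_trans hkey hlen
end

section
/- Let (Σ, f) be an (n−2)-dimensional cooperative Boolean system with outdegrees at most 2 and a periodic orbit of length L containing state s. Define an n-dimensional system (Π, g) by: g_k = f_k if k ≤ n−2 and f_k is strictly quadratic; g_k = s_{i_k} ∧ s_n if k ≤ n−2 and f_k = s_{i_k} is monic; and g_{n−1} = g_n = s_{n−1} ∧ s_n. Then (Π, g) is cooperative, every regulatory function of g is strictly quadratic (depends on exactly two variables), every indegree is at most 2, and the state s* = (s_1, …, s_{n−2}, 1, 1) lies on a periodic orbit of (Π, g) of length exactly L. -/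
/-- `φ` depends on input variable `i`. -/
def BoolDependsOn {n : ℕ} (φ : (Fin n → Bool) → Bool) (i : Fin n) : Prop :=
  ∃ s r : Fin n → Bool, (∀ j, j ≠ i → s j = r j) ∧ φ s ≠ φ r

/-- `φ` is strictly quadratic: it depends on exactly two (distinct) variables. -/
def StrictlyQuadratic {n : ℕ} (φ : (Fin n → Bool) → Bool) : Prop :=
  ∃ i j : Fin n, i ≠ j ∧ BoolDependsOn φ i ∧ BoolDependsOn φ j ∧
    ∀ l, BoolDependsOn φ l → l = i ∨ l = j

namespace Stmt17Aux

lemma and_mono {a b c d : Bool} (h1 : a ≤ b) (h2 : c ≤ d) : (a && c) ≤ (b && d) := by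
  cases a <;> cases b <;> cases c <;> cases d <;> simp_all

lemma dependsOn_and_left {n : ℕ} (a b : Fin n) (hab : a ≠ b) :
    BoolDependsOn (fun x => x a && x b) a := by
  refine ⟨fun _ => true, fun j => !decide (j = a), fun j hj => by simp [hj], ?_⟩
  simp [Ne.symm hab]

lemma dependsOn_and_right {n : ℕ} (a b : Fin n) (hab : a ≠ b) :
    BoolDependsOn (fun x => x a && x b) b := by
  refine ⟨fun _ => true, fun j => !decide (j = b), fun j hj => by simp [hj], ?_⟩
  simp [hab]

lemma not_dependsOn_and {n : ℕ} (a b l : Fin n) (hla : l ≠ a) (hlb : l ≠ b) :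
    ¬ BoolDependsOn (fun x => x a && x b) l := by
  rintro ⟨s, r, hsr, hne⟩
  apply hne
  show (s a && s b) = (r a && r b)
  rw [hsr a (Ne.symm hla), hsr b (Ne.symm hlb)]

lemma sq_and {n : ℕ} (a b : Fin n) (hab : a ≠ b) :
    StrictlyQuadratic (fun x => x a && x b) := by
  refine ⟨a, b, hab, dependsOn_and_left a b hab, dependsOn_and_right a b hab, fun l hl => ?_⟩
  by_contra h
  push_neg at h
  exact not_dependsOn_and a b l h.1 h.2 hl

def prj {m : ℕ} (x : Fin (m + 2) → Bool) : Fin m → Bool := fun i => x (Fin.castAdd 2 i)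

def ext {m : ℕ} (s : Fin m → Bool) : Fin (m + 2) → Bool :=
  fun i => if h : (i : ℕ) < m then s ⟨i, h⟩ else true

lemma prj_ext {m : ℕ} (s : Fin m → Bool) : prj (ext s) = s := by
  funext i
  simp [prj, ext, i.isLt]

lemma finCases3 {m : ℕ} (i : Fin (m + 2)) :
    (∃ k : Fin m, i = Fin.castAdd 2 k) ∨ i = Fin.castSucc (Fin.last m) ∨ i = Fin.last (m + 1) := by
  rcases lt_trichotomy (i : ℕ) m with h | h | h
  · exact Or.inl ⟨⟨i, h⟩, Fin.ext rfl⟩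
  · exact Or.inr (Or.inl (Fin.ext (by simp [h])))
  · have := i.isLt
    exact Or.inr (Or.inr (Fin.ext (by simp; omega)))

lemma dep_comp {m : ℕ} (φ : (Fin m → Bool) → Bool) (i : Fin m) (h : BoolDependsOn φ i) :
    BoolDependsOn (fun x => φ (prj x)) (Fin.castAdd 2 i) := by
  obtain ⟨s, r, hsr, hne⟩ := h
  refine ⟨ext s, ext r, ?_, by simpa only [prj_ext] using hne⟩
  intro j hj
  unfold ext
  by_cases h : (j : ℕ) < m
  · simp only [dif_pos h]
    exact hsr _ (fun he => hj (Fin.ext (by simpa using congrArg Fin.val he)))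
  · simp only [dif_neg h]

lemma dep_comp_rev {m : ℕ} (φ : (Fin m → Bool) → Bool) (l : Fin (m + 2))
    (h : BoolDependsOn (fun x => φ (prj x)) l) :
    ∃ i : Fin m, l = Fin.castAdd 2 i ∧ BoolDependsOn φ i := by
  obtain ⟨s, r, hsr, hne⟩ := h
  by_cases hl : (l : ℕ) < m
  · refine ⟨⟨l, hl⟩, Fin.ext rfl, prj s, prj r, ?_, hne⟩
    intro j hj
    apply hsr
    intro he
    exact hj (Fin.ext (by simpa using congrArg Fin.val he))
  · exfalso
    apply hne
    show φ (prj s) = φ (prj r)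
    have hpr : prj s = prj r := by
      funext j
      refine hsr _ (fun he => ?_)
      have h1 := congrArg Fin.val he
      simp only [Fin.coe_castAdd] at h1
      have h2 := j.isLt
      omega
    rw [hpr]

lemma sq_comp {m : ℕ} (φ : (Fin m → Bool) → Bool) (h : StrictlyQuadratic φ) :
    StrictlyQuadratic (fun x : Fin (m + 2) → Bool => φ (prj x)) := by
  obtain ⟨i, j, hij, hi, hj, hmax⟩ := h
  refine ⟨Fin.castAdd 2 i, Fin.castAdd 2 j, ?_, dep_comp φ i hi, dep_comp φ j hj, ?_⟩
  · intro he
    exact hij (Fin.ext (by simpa using congrArg Fin.val he))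
  · intro l hl
    obtain ⟨i', rfl, hi'⟩ := dep_comp_rev φ l hl
    rcases hmax i' hi' with rfl | rfl
    · exact Or.inl rfl
    · exact Or.inr rfl

lemma ncard_le {n : ℕ} {φ : (Fin n → Bool) → Bool} (h : StrictlyQuadratic φ) :
    Set.ncard {i | BoolDependsOn φ i} ≤ 2 := by
  obtain ⟨i, j, hij, _, _, hmax⟩ := h
  have hsub : {l | BoolDependsOn φ l} ⊆ {i, j} := by
    intro l hl
    rcases hmax l hl with rfl | rfl <;> simp
  calc Set.ncard {l | BoolDependsOn φ l} ≤ Set.ncard ({i, j} : Set (Fin n)) :=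
        Set.ncard_le_ncard hsub (Set.toFinite _)
    _ ≤ Set.ncard ({j} : Set (Fin n)) + 1 := Set.ncard_insert_le i {j}
    _ ≤ 2 := by rw [Set.ncard_singleton]

end Stmt17Aux

open Stmt17Aux


/-- The construction adding two always-on variables: given an `m`-dimensional cooperative
system `f` with outdegrees at most 2 and a state `s` on a periodic orbit of length exactly
`L`, the `(m+2)`-dimensional system `g` (with `g_k = f_k` for strictly quadratic `f_k`,
`g_k = s_{i_k} ∧ s_{m+1}` for monic `f_k = s_{i_k}`, and `g_m = g_{m+1} = s_m ∧ s_{m+1}`)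
is cooperative, has only strictly quadratic regulatory functions, has indegrees at most 2,
and the state `s* = (s, 1, 1)` lies on a periodic orbit of `g` of length exactly `L`. -/
theorem stmt17 {m : ℕ} (f : (Fin m → Bool) → (Fin m → Bool))
    (hf : Cooperative f)
    (hout : ∀ i, Set.ncard {k | BoolDependsOn (fun x => f x k) i} ≤ 2)
    (L : ℕ) (hL : 0 < L) (s : Fin m → Bool)
    (hfix : f^[L] s = s)
    (hdist : Set.InjOn (fun t => f^[t] s) (Finset.range L))
    (g : (Fin (m + 2) → Bool) → (Fin (m + 2) → Bool))
    (hg : ∀ k : Fin m,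
      (StrictlyQuadratic (fun x => f x k) ∧
        ∀ x : Fin (m + 2) → Bool,
          g x (Fin.castAdd 2 k) = f (fun i => x (Fin.castAdd 2 i)) k) ∨
      (∃ i : Fin m, (∀ x, f x k = x i) ∧
        ∀ x : Fin (m + 2) → Bool,
          g x (Fin.castAdd 2 k) = (x (Fin.castAdd 2 i) && x (Fin.last (m + 1)))))
    (hga : ∀ x : Fin (m + 2) → Bool,
      g x (Fin.castSucc (Fin.last m)) = (x (Fin.castSucc (Fin.last m)) && x (Fin.last (m + 1))))
    (hgb : ∀ x : Fin (m + 2) → Bool,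
      g x (Fin.last (m + 1)) = (x (Fin.castSucc (Fin.last m)) && x (Fin.last (m + 1)))) :
    Cooperative g ∧
    (∀ k : Fin (m + 2), StrictlyQuadratic fun x => g x k) ∧
    (∀ k : Fin (m + 2), Set.ncard {i | BoolDependsOn (fun x => g x k) i} ≤ 2) ∧
    (g^[L] (fun i : Fin (m + 2) => if h : (i : ℕ) < m then s ⟨i, h⟩ else true) =
        (fun i : Fin (m + 2) => if h : (i : ℕ) < m then s ⟨i, h⟩ else true)) ∧
    Set.InjOn
      (fun t => g^[t] fun i : Fin (m + 2) => if h : (i : ℕ) < m then s ⟨i, h⟩ else true)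
      (Finset.range L) := by
  have hab : Fin.castSucc (Fin.last m) ≠ Fin.last (m + 1) := by
    intro h
    have := congrArg Fin.val h
    simp at this
  have hca : ∀ i : Fin m, Fin.castAdd 2 i ≠ Fin.last (m + 1) := by
    intro i h
    have := congrArg Fin.val h
    simp at this
    omega
  -- strictly quadratic
  have hsq : ∀ k : Fin (m + 2), StrictlyQuadratic fun x => g x k := by
    intro k
    obtain ⟨k', rfl⟩ | rfl | rfl := finCases3 k
    · rcases hg k' with ⟨hq, heq⟩ | ⟨i0, _, heq⟩
      · have hfun : (fun x => g x (Fin.castAdd 2 k')) =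
            fun x : Fin (m + 2) → Bool => (fun y => f y k') (prj x) := funext heq
        rw [hfun]
        exact sq_comp _ hq
      · have hfun : (fun x => g x (Fin.castAdd 2 k')) =
            fun x : Fin (m + 2) → Bool => x (Fin.castAdd 2 i0) && x (Fin.last (m + 1)) :=
          funext heq
        rw [hfun]
        exact sq_and _ _ (hca i0)
    · have hfun : (fun x => g x (Fin.castSucc (Fin.last m))) =
          fun x : Fin (m + 2) → Bool =>
            x (Fin.castSucc (Fin.last m)) && x (Fin.last (m + 1)) := funext hga
      rw [hfun]
      exact sq_and _ _ hab
    · have hfun : (fun x => g x (Fin.last (m + 1))) =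
          fun x : Fin (m + 2) → Bool =>
            x (Fin.castSucc (Fin.last m)) && x (Fin.last (m + 1)) := funext hgb
      rw [hfun]
      exact sq_and _ _ hab
  -- conjugacy
  have key : ∀ u : Fin m → Bool, g (ext u) = ext (f u) := by
    intro u
    funext i
    obtain ⟨k, rfl⟩ | rfl | rfl := finCases3 i
    · rcases hg k with ⟨_, heq⟩ | ⟨i0, hm0, heq⟩
      · rw [heq]
        show f (prj (ext u)) k = ext (f u) (Fin.castAdd 2 k)
        rw [prj_ext]
        simp [ext, k.isLt]
      · rw [heq]
        show (ext u (Fin.castAdd 2 i0) && ext u (Fin.last (m + 1))) =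
          ext (f u) (Fin.castAdd 2 k)
        simp [ext, i0.isLt, k.isLt, hm0]
    · rw [hga]
      simp [ext]
    · rw [hgb]
      simp [ext]
  have iter : ∀ t, g^[t] (ext s) = ext (f^[t] s) := by
    intro t
    induction t with
    | zero => rfl
    | succ t ih =>
      rw [Function.iterate_succ_apply', Function.iterate_succ_apply', ih, key]
  refine ⟨?_, hsq, fun k => ncard_le (hsq k), ?_, ?_⟩
  · -- cooperative
    intro x y hxy i
    obtain ⟨k, rfl⟩ | rfl | rfl := finCases3 i
    · rcases hg k with ⟨_, heq⟩ | ⟨i0, _, heq⟩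
      · rw [heq, heq]
        exact hf (prj x) (prj y) (fun j => hxy _) k
      · rw [heq, heq]
        exact and_mono (hxy _) (hxy _)
    · rw [hga, hga]
      exact and_mono (hxy _) (hxy _)
    · rw [hgb, hgb]
      exact and_mono (hxy _) (hxy _)
  · show g^[L] (ext s) = ext s
    rw [iter, hfix]
  · intro t ht u hu h
    simp only at h
    have h' : ext (f^[t] s) = ext (f^[u] s) := by
      rw [← iter, ← iter]; exact h
    have := congrArg prj h'
    rw [prj_ext, prj_ext] at this
    exact hdist ht hu this
end

section
/- For any real x with 0 < x < 1 and 0 < ε < 1 − x, the quantity λ = ((x/(x+ε))^{x+ε}) · (((1−x)/(1−x−ε))^{1−x−ε}) satisfies 0 < λ ≤ e^{−2ε²} < 1. -/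
open Real

private lemma pinsker_aux (x ε : ℝ) (hx0 : 0 < x) (hx1 : x < 1) (hε0 : 0 < ε)
    (hε1 : ε < 1 - x) :
    2 * ε ^ 2 ≤ (x + ε) * (Real.log (x + ε) - Real.log x)
      + (1 - x - ε) * (Real.log (1 - x - ε) - Real.log (1 - x)) := by
  set f : ℝ → ℝ := fun t => (x + t) * (Real.log (x + t) - Real.log x)
      + (1 - x - t) * (Real.log (1 - x - t) - Real.log (1 - x)) - 2 * t ^ 2 with hf
  set g : ℝ → ℝ := fun t => Real.log (x + t) - Real.log x
      - (Real.log (1 - x - t) - Real.log (1 - x)) - 4 * t with hg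
  have hpos : ∀ t ∈ Set.Icc (0:ℝ) ε, 0 < x + t ∧ 0 < 1 - x - t := by
    rintro t ⟨h1, h2⟩
    constructor <;> nlinarith
  have hdf : ∀ t ∈ Set.Icc (0:ℝ) ε, HasDerivAt f (g t) t := by
    intro t ht
    obtain ⟨h1, h2⟩ := hpos t ht
    have da : HasDerivAt (fun t => x + t) 1 t := by
      simpa using (hasDerivAt_id t).const_add x
    have db : HasDerivAt (fun t => 1 - x - t) (-1) t := by
      simpa using ((hasDerivAt_id t).const_sub (1 - x))
    have dla : HasDerivAt (fun t => Real.log (x + t) - Real.log x) (1 / (x + t)) t := by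
      simpa using ((da.log h1.ne').sub_const (Real.log x))
    have dlb : HasDerivAt (fun t => Real.log (1 - x - t) - Real.log (1 - x))
        ((-1) / (1 - x - t)) t := by
      simpa using ((db.log h2.ne').sub_const (Real.log (1 - x)))
    have dsq : HasDerivAt (fun t : ℝ => 2 * t ^ 2) (4 * t) t := by
      have h := (hasDerivAt_pow 2 t).const_mul (2:ℝ)
      refine h.congr_deriv ?_
      simp
      ring
    have := ((da.mul dla).add (db.mul dlb)).sub dsq
    refine this.congr_deriv ?_
    field_simp [hg]
    ring
  have hdg : ∀ t ∈ Set.Icc (0:ℝ) ε,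
      HasDerivAt g (1 / (x + t) + 1 / (1 - x - t) - 4) t := by
    intro t ht
    obtain ⟨h1, h2⟩ := hpos t ht
    have da : HasDerivAt (fun t => x + t) 1 t := by
      simpa using (hasDerivAt_id t).const_add x
    have db : HasDerivAt (fun t => 1 - x - t) (-1) t := by
      simpa using ((hasDerivAt_id t).const_sub (1 - x))
    have dla : HasDerivAt (fun t => Real.log (x + t) - Real.log x) (1 / (x + t)) t := by
      simpa using ((da.log h1.ne').sub_const (Real.log x))
    have dlb : HasDerivAt (fun t => Real.log (1 - x - t) - Real.log (1 - x))
        ((-1) / (1 - x - t)) t := by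
      simpa using ((db.log h2.ne').sub_const (Real.log (1 - x)))
    have dlin : HasDerivAt (fun t : ℝ => 4 * t) 4 t := by
      simpa using (hasDerivAt_id t).const_mul (4:ℝ)
    have := (dla.sub dlb).sub dlin
    refine this.congr_deriv ?_
    field_simp
    ring
  -- g is monotone on [0, ε] since its derivative is nonneg
  have hgnn : ∀ t ∈ Set.Icc (0:ℝ) ε, 0 ≤ 1 / (x + t) + 1 / (1 - x - t) - 4 := by
    intro t ht
    obtain ⟨h1, h2⟩ := hpos t ht
    have hab : (x + t) * (1 - x - t) ≤ 1 / 4 := by nlinarith [sq_nonneg (x + t - (1 - x - t))]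
    have : (4:ℝ) ≤ 1 / ((x + t) * (1 - x - t)) := by
      rw [le_div_iff₀ (by positivity)]; linarith
    have heq : 1 / (x + t) + 1 / (1 - x - t) = 1 / ((x + t) * (1 - x - t)) := by
      field_simp
      ring
    linarith [heq ▸ this]
  have hconv : Convex ℝ (Set.Icc (0:ℝ) ε) := convex_Icc 0 ε
  have hintg : interior (Set.Icc (0:ℝ) ε) = Set.Ioo 0 ε := interior_Icc
  have hgmono : MonotoneOn g (Set.Icc 0 ε) := by
    apply monotoneOn_of_deriv_nonneg hconv
    · exact fun t ht => (hdg t ht).continuousAt.continuousWithinAt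
    · intro t ht
      rw [hintg] at ht
      exact (hdg t (Set.mem_Icc_of_Ioo ht)).differentiableAt.differentiableWithinAt
    · intro t ht
      rw [hintg] at ht
      rw [(hdg t (Set.mem_Icc_of_Ioo ht)).deriv]
      exact hgnn t (Set.mem_Icc_of_Ioo ht)
  have hg0 : g 0 = 0 := by simp [hg]
  have hgnneg : ∀ t ∈ Set.Icc (0:ℝ) ε, 0 ≤ g t := by
    intro t ht
    have := hgmono (Set.left_mem_Icc.2 hε0.le) ht ht.1
    linarith [hg0 ▸ this]
  have hfmono : MonotoneOn f (Set.Icc 0 ε) := by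
    apply monotoneOn_of_deriv_nonneg hconv
    · exact fun t ht => (hdf t ht).continuousAt.continuousWithinAt
    · intro t ht
      rw [hintg] at ht
      exact (hdf t (Set.mem_Icc_of_Ioo ht)).differentiableAt.differentiableWithinAt
    · intro t ht
      rw [hintg] at ht
      rw [(hdf t (Set.mem_Icc_of_Ioo ht)).deriv]
      exact hgnneg t (Set.mem_Icc_of_Ioo ht)
  have hf0 : f 0 = 0 := by simp [hf]
  have := hfmono (Set.left_mem_Icc.2 hε0.le) (Set.right_mem_Icc.2 hε0.le) hε0.le
  rw [hf0] at this
  have : 0 ≤ f ε := this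
  simp only [hf] at this
  linarith

/-- The Chernoff–Hoeffding relative-entropy factor is at most `exp(-2ε²) < 1`. -/
theorem stmt19 (x ε : ℝ) (hx0 : 0 < x) (hx1 : x < 1) (hε0 : 0 < ε) (hε1 : ε < 1 - x) :
    0 < (x / (x + ε)) ^ (x + ε) * ((1 - x) / (1 - x - ε)) ^ (1 - x - ε) ∧
    (x / (x + ε)) ^ (x + ε) * ((1 - x) / (1 - x - ε)) ^ (1 - x - ε) ≤
      Real.exp (-2 * ε ^ 2) ∧
    Real.exp (-2 * ε ^ 2) < 1 := by
  have h1 : 0 < x + ε := by linarith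
  have h2 : 0 < 1 - x - ε := by linarith
  have hb1 : 0 < x / (x + ε) := by positivity
  have hb2 : 0 < (1 - x) / (1 - x - ε) := div_pos (by linarith) h2
  have hL : 0 < (x / (x + ε)) ^ (x + ε) * ((1 - x) / (1 - x - ε)) ^ (1 - x - ε) :=
    mul_pos (Real.rpow_pos_of_pos hb1 _) (Real.rpow_pos_of_pos hb2 _)
  refine ⟨hL, ?_, ?_⟩
  · rw [← Real.exp_log hL]
    apply Real.exp_le_exp.2
    rw [Real.log_mul (Real.rpow_pos_of_pos hb1 _).ne' (Real.rpow_pos_of_pos hb2 _).ne',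
      Real.log_rpow hb1, Real.log_rpow hb2,
      Real.log_div hx0.ne' h1.ne', Real.log_div (by linarith) h2.ne']
    have := pinsker_aux x ε hx0 hx1 hε0 hε1
    nlinarith
  · rw [Real.exp_lt_one_iff]
    nlinarith
end
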